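/- arXiv:1903.08354 — 8 statements merged into one kernel-verified Lean document; each statement's English description precedes it below -/
import Mathlib

section
/- Let L̃ be an invertible N×N real symmetric matrix and let L = R L̃ R^T where R^T = [1_N -I_N]. Then the matrix L^+ := R J L̃^{-1} J R^T, with J = I_N - (1/(N+1)) 1_N 1_N^T, satisfies L L^+ L = L and L^+ L L^+ = L^+, i.e., L^+ is a generalized (reflexive) inverse of L. -/
open Matrix

theorem stmt1 (N : ℕ) (hN : 0 < N)
    (R : Matrix (Fin (N + 1)) (Fin N) ℝ)
    (hR : ∀ (i : Fin (N + 1)) (j : Fin N),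
      R i j = if i = 0 then 1 else if i = j.succ then -1 else 0)
    (J : Matrix (Fin N) (Fin N) ℝ)
    (hJ : J = 1 - (((N : ℝ) + 1)⁻¹) • Matrix.of (fun _ _ => (1 : ℝ)))
    (Lt : Matrix (Fin N) (Fin N) ℝ) (hsym : Lt.IsSymm) (hinv : IsUnit Lt.det)
    (L Lp : Matrix (Fin (N + 1)) (Fin (N + 1)) ℝ)
    (hL : L = R * Lt * Rᵀ)
    (hLp : Lp = R * J * Lt⁻¹ * J * Rᵀ) :
    L * Lp * L = L ∧ Lp * L * Lp = Lp := by
  set E : Matrix (Fin N) (Fin N) ℝ := Matrix.of (fun _ _ => (1 : ℝ)) with hE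
  have hRR : Rᵀ * R = 1 + E := by
    ext j k
    simp only [mul_apply, transpose_apply, hR]
    rw [Fin.sum_univ_succ]
    have h0 : (0 : Fin (N + 1)) = 0 := rfl
    simp only [if_pos h0]
    have : ∀ l : Fin N,
        (if (l.succ : Fin (N+1)) = 0 then (1:ℝ) else if l.succ = j.succ then -1 else 0) *
        (if (l.succ : Fin (N+1)) = 0 then (1:ℝ) else if l.succ = k.succ then -1 else 0) =
        if l = j then (if l = k then 1 else 0) else 0 := by
      intro l
      have hs : (l.succ : Fin (N+1)) ≠ 0 := Fin.succ_ne_zero l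
      rw [if_neg hs, if_neg hs]
      simp only [Fin.succ_inj]
      split_ifs <;> ring
    rw [Finset.sum_congr rfl (fun l _ => this l)]
    rw [Finset.sum_ite_eq' Finset.univ j (fun l => if l = k then (1:ℝ) else 0)]
    by_cases hjk : j = k <;> simp [hjk, Matrix.one_apply, Matrix.add_apply, hE, eq_comm]
  have hEE : E * E = (N : ℝ) • E := by
    ext j k
    simp [hE, mul_apply]
  have hc : ((N : ℝ) + 1)⁻¹ * ((N : ℝ) + 1) = 1 := by
    refine inv_mul_cancel₀ ?_
    positivity
  have hJA : J * (Rᵀ * R) = 1 := by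
    rw [hJ, hRR, sub_mul, one_mul, smul_mul_assoc, mul_add, mul_one, hEE]
    rw [smul_add, smul_smul]
    have : E = (1 : ℝ) • E := (one_smul _ _).symm
    calc 1 + E - (((N:ℝ)+1)⁻¹ • E + (((N:ℝ)+1)⁻¹ * (N:ℝ)) • E)
        = 1 + ((1:ℝ) - (((N:ℝ)+1)⁻¹ + ((N:ℝ)+1)⁻¹ * (N:ℝ))) • E := by
          rw [sub_smul, one_smul, add_smul]; abel
      _ = 1 := by
          have : (1:ℝ) - (((N:ℝ)+1)⁻¹ + ((N:ℝ)+1)⁻¹ * (N:ℝ)) = 0 := by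
            have := hc; nlinarith [hc]
          rw [this, zero_smul, add_zero]
  have hAJ : (Rᵀ * R) * J = 1 := by
    rw [hJ, hRR, mul_sub, mul_one, mul_smul_comm, add_mul, one_mul, hEE]
    rw [smul_add, smul_smul]
    calc 1 + E - (((N:ℝ)+1)⁻¹ • E + (((N:ℝ)+1)⁻¹ * (N:ℝ)) • E)
        = 1 + ((1:ℝ) - (((N:ℝ)+1)⁻¹ + ((N:ℝ)+1)⁻¹ * (N:ℝ))) • E := by
          rw [sub_smul, one_smul, add_smul]; abel
      _ = 1 := by
          have : (1:ℝ) - (((N:ℝ)+1)⁻¹ + ((N:ℝ)+1)⁻¹ * (N:ℝ)) = 0 := by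
            nlinarith [hc]
          rw [this, zero_smul, add_zero]
  have hLtinv : Lt * Lt⁻¹ = 1 := Matrix.mul_nonsing_inv Lt hinv
  have hinvLt : Lt⁻¹ * Lt = 1 := Matrix.nonsing_inv_mul Lt hinv
  constructor
  · rw [hL, hLp]
    have h1 : R * Lt * Rᵀ * (R * J * Lt⁻¹ * J * Rᵀ) * (R * Lt * Rᵀ)
        = R * Lt * ((Rᵀ * R) * J) * Lt⁻¹ * (J * (Rᵀ * R)) * Lt * Rᵀ := by
      simp only [Matrix.mul_assoc]
    rw [h1, hAJ, hJA, Matrix.mul_one, Matrix.mul_one, Matrix.mul_assoc R, hLtinv, Matrix.mul_one]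
  · rw [hL, hLp]
    have h2 : R * J * Lt⁻¹ * J * Rᵀ * (R * Lt * Rᵀ) * (R * J * Lt⁻¹ * J * Rᵀ)
        = R * J * Lt⁻¹ * (J * (Rᵀ * R)) * Lt * ((Rᵀ * R) * J) * Lt⁻¹ * J * Rᵀ := by
      simp only [Matrix.mul_assoc]
    rw [h2, hAJ, hJA, Matrix.mul_one, Matrix.mul_one, Matrix.mul_assoc (R * J), hinvLt, Matrix.mul_one]
end

section
/- Let W = R W̃ R^T and L = R L̃ R^T where R^T = [1_N -I_N], W̃ is symmetric N×N, and L̃ is invertible symmetric N×N. Then trace(W · (R J L̃^{-1} J R^T)) = trace(W̃ L̃^{-1}), where J = I_N - (1/(N+1)) 1_N 1_N^T. -/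
open Matrix

theorem stmt2 (N : ℕ) (hN : 0 < N)
    (R : Matrix (Fin (N + 1)) (Fin N) ℝ)
    (hR : ∀ (i : Fin (N + 1)) (j : Fin N),
      R i j = if i = 0 then 1 else if i = j.succ then -1 else 0)
    (J : Matrix (Fin N) (Fin N) ℝ)
    (hJ : J = 1 - (((N : ℝ) + 1)⁻¹) • Matrix.of (fun _ _ => (1 : ℝ)))
    (Wt Lt : Matrix (Fin N) (Fin N) ℝ)
    (hWsym : Wt.IsSymm) (hLsym : Lt.IsSymm) (hinv : IsUnit Lt.det)
    (W : Matrix (Fin (N + 1)) (Fin (N + 1)) ℝ) (hW : W = R * Wt * Rᵀ) :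
    Matrix.trace (W * (R * J * Lt⁻¹ * J * Rᵀ)) = Matrix.trace (Wt * Lt⁻¹) := by
  set U : Matrix (Fin N) (Fin N) ℝ := Matrix.of (fun _ _ => (1 : ℝ)) with hU
  have hRtR : Rᵀ * R = 1 + U := by
    ext j k
    rw [Matrix.mul_apply, Fin.sum_univ_succ]
    simp only [Matrix.transpose_apply, hR, Fin.succ_ne_zero, if_false, Fin.succ_inj,
      if_pos rfl, one_mul]
    have hsummand : ∀ i : Fin N,
        (if i = j then (-1:ℝ) else 0) * (if i = k then -1 else 0)
          = if i = j then (if j = k then 1 else 0) else 0 := by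
      intro i
      by_cases h1 : i = j <;> by_cases h2 : i = k <;> subst_vars <;> simp_all
    rw [Finset.sum_congr rfl (fun i _ => hsummand i), Finset.sum_ite_eq' Finset.univ j]
    simp only [Finset.mem_univ, if_true, Matrix.add_apply, Matrix.one_apply, hU,
      Matrix.of_apply]
    by_cases h : j = k <;> simp [h] <;> ring
  have hUU : U * U = (N : ℝ) • U := by
    ext j k
    simp [hU, Matrix.mul_apply]
  have hne : ((N : ℝ) + 1) ≠ 0 := by positivity
  have h1 : (1 + U) * U = ((N : ℝ) + 1) • U := by
    rw [add_mul, one_mul, hUU, add_smul, one_smul, add_comm]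
  have hJR : (1 + U) * J = 1 := by
    rw [hJ, mul_sub, mul_one, Matrix.mul_smul, h1, smul_smul, inv_mul_cancel₀ hne,
      one_smul, add_sub_cancel_right]
  have hUsym : Uᵀ = U := by ext i j; simp [hU]
  have hJsym : Jᵀ = J := by
    rw [hJ, Matrix.transpose_sub, Matrix.transpose_one, Matrix.transpose_smul, hUsym]
  have hRJ : J * (1 + U) = 1 := by
    have h2 : (1 + U)ᵀ = 1 + U := by
      rw [Matrix.transpose_add, Matrix.transpose_one, hUsym]
    calc J * (1 + U) = ((1 + U)ᵀ * Jᵀ)ᵀ := by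
          rw [← Matrix.transpose_mul, Matrix.transpose_transpose]
      _ = ((1 + U) * J)ᵀ := by rw [hJsym, h2]
      _ = 1 := by rw [hJR, Matrix.transpose_one]
  rw [hW]
  rw [show R * Wt * Rᵀ * (R * J * Lt⁻¹ * J * Rᵀ)
      = R * (Wt * (Rᵀ * R) * J * Lt⁻¹ * J) * Rᵀ by
    simp only [Matrix.mul_assoc]]
  rw [Matrix.trace_mul_cycle, ← Matrix.mul_assoc, hRtR]
  rw [show Wt * (1 + U) * J * Lt⁻¹ = Wt * Lt⁻¹ by
    rw [Matrix.mul_assoc Wt, hJR, Matrix.mul_one]]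
  rw [Matrix.trace_mul_cycle, hRJ, Matrix.one_mul]
end

section
/- Let W and L be real symmetric (N+1)×(N+1) positive semidefinite matrices with W·1 = 0 and L·1 = 0, and suppose L has rank N. Then trace(W L^+) = trace(W̃ L̃^{-1}), where L^+ is the Moore–Penrose pseudoinverse of L, and W̃, L̃ are the N×N matrices obtained by deleting the first row and column of W and L respectively (L̃ being invertible). -/
/-!
Let `T : ℝ^{N+1} → ℝ^N` send `x` to `(x (i+1) - x 0)ᵢ`. A matrix `M` with `M 1 = 0` and
`1ᵀ M = 0` factors as `M = Tᵀ M̃ T`, where `M̃` deletes the first row and column, and the last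
`N` columns of `T` form the identity. So `rank L ≤ rank L̃` makes `L̃` invertible; compressing
`L Lp L = L` by `T` gives `L̃ (T Lp Tᵀ) L̃ = L̃`, i.e. `T Lp Tᵀ = L̃⁻¹`; and cyclicity of the trace
turns `trace (Tᵀ W̃ T Lp)` into `trace (W̃ (T Lp Tᵀ))`.
-/

open Matrix

namespace Matrix

variable {R : Type*} {n : ℕ}

theorem isUnit_det_of_card_le_rank {K m : Type*} [Field K] [Fintype m] [DecidableEq m]
    {A : Matrix m m K} (h : Fintype.card m ≤ A.rank) : IsUnit A.det := by
  have hrange : LinearMap.range A.mulVecLin = ⊤ :=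
    Submodule.eq_top_of_finrank_eq (le_antisymm (Submodule.finrank_le _) (by simpa [rank] using h))
  exact (isUnit_iff_isUnit_det A).mp
    (mulVec_surjective_iff_isUnit.mp (LinearMap.range_eq_top.mp hrange))

theorem eq_inv_of_mul_mul_self [CommRing R] {m : Type*} [Fintype m] [DecidableEq m]
    {A X : Matrix m m R} (hA : IsUnit A.det) (h : A * X * A = A) : X = A⁻¹ := by
  calc X = A⁻¹ * (A * X * A) * A⁻¹ := by
        simp only [Matrix.mul_assoc, mul_nonsing_inv _ hA, Matrix.mul_one,
          ← Matrix.mul_assoc A⁻¹, nonsing_inv_mul _ hA, Matrix.one_mul]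
    _ = A⁻¹ := by rw [h, nonsing_inv_mul _ hA, Matrix.one_mul]

theorem IsHermitian.vecMul_eq_mulVec {α m : Type*} [Fintype m] [CommSemiring α] [StarRing α]
    [TrivialStar α] {A : Matrix m m α} (hA : A.IsHermitian) (x : m → α) : x ᵥ* A = A *ᵥ x := by
  rw [← mulVec_transpose, ← conjTranspose_eq_transpose_of_trivial, hA.eq]

variable (R n) in
/-- The block matrix `[-1 | 1]`, i.e. `x ↦ (x (i+1) - x 0)ᵢ`. -/
def succSubZero [Zero R] [One R] [Neg R] : Matrix (Fin n) (Fin (n + 1)) R :=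
  of fun i => Fin.cases (-1) fun j => if i = j then 1 else 0

theorem succSubZero_submatrix_succ [Ring R] :
    (succSubZero R n).submatrix id Fin.succ = 1 := by
  ext i j
  simp [succSubZero, one_apply]

theorem submatrix_succ_transpose_succSubZero_mul_mul [CommRing R] (X : Matrix (Fin n) (Fin n) R) :
    ((succSubZero R n)ᵀ * X * succSubZero R n).submatrix Fin.succ Fin.succ = X := by
  rw [submatrix_mul _ _ _ id _ Function.bijective_id,
    submatrix_mul _ _ _ id _ Function.bijective_id, ← transpose_submatrix,
    succSubZero_submatrix_succ]
  simp

section ZeroLineSums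

variable [CommRing R] {M : Matrix (Fin (n + 1)) (Fin (n + 1)) R}

theorem transpose_succSubZero_mul_submatrix_mul_succSubZero
    (hrow : M *ᵥ (fun _ => 1) = 0) (hcol : (fun _ => 1) ᵥ* M = 0) :
    (succSubZero R n)ᵀ * M.submatrix Fin.succ Fin.succ * succSubZero R n = M := by
  have hrow' : ∀ i, M i 0 = -∑ j : Fin n, M i j.succ := fun i => by
    have := congrFun hrow i
    simp only [mulVec, dotProduct, mul_one, Fin.sum_univ_succ, Pi.zero_apply] at this
    linear_combination this
  have hcol' : ∀ j, M 0 j = -∑ i : Fin n, M i.succ j := fun j => by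
    have := congrFun hcol j
    simp only [vecMul, dotProduct, one_mul, Fin.sum_univ_succ, Pi.zero_apply] at this
    linear_combination this
  ext i j
  refine Fin.cases ?_ (fun i => ?_) i <;> refine Fin.cases ?_ (fun j => ?_) j <;>
    simp [mul_apply, succSubZero, hrow', hcol', Finset.sum_neg_distrib]

theorem rank_le_rank_submatrix_succ [StrongRankCondition R]
    (hrow : M *ᵥ (fun _ => 1) = 0) (hcol : (fun _ => 1) ᵥ* M = 0) :
    M.rank ≤ (M.submatrix Fin.succ Fin.succ).rank := by
  conv_lhs => rw [← transpose_succSubZero_mul_submatrix_mul_succSubZero hrow hcol]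
  exact (rank_mul_le_left _ _).trans (rank_mul_le_right _ _)

theorem succSubZero_mul_mul_transpose_eq_inv
    (hrow : M *ᵥ (fun _ => 1) = 0) (hcol : (fun _ => 1) ᵥ* M = 0)
    {G : Matrix (Fin (n + 1)) (Fin (n + 1)) R} (hG : M * G * M = M)
    (hdet : IsUnit (M.submatrix Fin.succ Fin.succ).det) :
    succSubZero R n * G * (succSubZero R n)ᵀ = (M.submatrix Fin.succ Fin.succ)⁻¹ := by
  set T := succSubZero R n
  set Mt := M.submatrix Fin.succ Fin.succ
  have hM : Tᵀ * Mt * T = M := transpose_succSubZero_mul_submatrix_mul_succSubZero hrow hcol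
  refine eq_inv_of_mul_mul_self hdet ?_
  calc Mt * (T * G * Tᵀ) * Mt
      = (Tᵀ * Mt * T * G * (Tᵀ * Mt * T)).submatrix Fin.succ Fin.succ := by
        rw [← submatrix_succ_transpose_succSubZero_mul_mul (Mt * (T * G * Tᵀ) * Mt)]
        simp only [T, Matrix.mul_assoc]
    _ = Mt := by rw [hM, hG]

theorem trace_mul_eq_trace_submatrix_succ_mul
    (hrow : M *ᵥ (fun _ => 1) = 0) (hcol : (fun _ => 1) ᵥ* M = 0)
    (G : Matrix (Fin (n + 1)) (Fin (n + 1)) R) :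
    trace (M * G) =
      trace (M.submatrix Fin.succ Fin.succ * (succSubZero R n * G * (succSubZero R n)ᵀ)) := by
  conv_lhs => rw [← transpose_succSubZero_mul_submatrix_mul_succSubZero hrow hcol]
  rw [Matrix.mul_assoc, Matrix.mul_assoc, trace_mul_comm]
  simp only [Matrix.mul_assoc]

end ZeroLineSums

end Matrix

theorem stmt3_general (N : ℕ)
    (W L : Matrix (Fin (N + 1)) (Fin (N + 1)) ℝ)
    (hWpsd : W.PosSemidef) (hLpsd : L.PosSemidef)
    (hW1 : W *ᵥ (fun _ => (1 : ℝ)) = 0) (hL1 : L *ᵥ (fun _ => (1 : ℝ)) = 0)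
    (hrank : L.rank = N)
    (Lp : Matrix (Fin (N + 1)) (Fin (N + 1)) ℝ)
    (h1 : L * Lp * L = L)
    (Wt Lt : Matrix (Fin N) (Fin N) ℝ)
    (hWt : Wt = W.submatrix Fin.succ Fin.succ)
    (hLt : Lt = L.submatrix Fin.succ Fin.succ) :
    IsUnit Lt.det ∧ Matrix.trace (W * Lp) = Matrix.trace (Wt * Lt⁻¹) := by
  subst hWt hLt
  have hW1' : (fun _ => (1 : ℝ)) ᵥ* W = 0 := by rw [hWpsd.isHermitian.vecMul_eq_mulVec, hW1]
  have hL1' : (fun _ => (1 : ℝ)) ᵥ* L = 0 := by rw [hLpsd.isHermitian.vecMul_eq_mulVec, hL1]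
  have hdet : IsUnit (L.submatrix Fin.succ Fin.succ).det := isUnit_det_of_card_le_rank <| by
    simpa [hrank] using rank_le_rank_submatrix_succ hL1 hL1'
  refine ⟨hdet, ?_⟩
  rw [trace_mul_eq_trace_submatrix_succ_mul hW1 hW1',
    succSubZero_mul_mul_transpose_eq_inv hL1 hL1' h1 hdet]

theorem stmt3 (N : ℕ) (hN : 0 < N)
    (W L : Matrix (Fin (N + 1)) (Fin (N + 1)) ℝ)
    (hWpsd : W.PosSemidef) (hLpsd : L.PosSemidef)
    (hW1 : W *ᵥ (fun _ => (1 : ℝ)) = 0) (hL1 : L *ᵥ (fun _ => (1 : ℝ)) = 0)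
    (hrank : L.rank = N)
    (Lp : Matrix (Fin (N + 1)) (Fin (N + 1)) ℝ)
    (h1 : L * Lp * L = L) (h2 : Lp * L * Lp = Lp)
    (h3 : (L * Lp)ᵀ = L * Lp) (h4 : (Lp * L)ᵀ = Lp * L)
    (Wt Lt : Matrix (Fin N) (Fin N) ℝ)
    (hWt : Wt = W.submatrix Fin.succ Fin.succ)
    (hLt : Lt = L.submatrix Fin.succ Fin.succ) :
    IsUnit Lt.det ∧ Matrix.trace (W * Lp) = Matrix.trace (Wt * Lt⁻¹) :=
  stmt3_general N W L hWpsd hLpsd hW1 hL1 hrank Lp h1 Wt Lt hWt hLt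
end

section
/- Let T be a tree on node set {0,1,...,N} with positive edge susceptances b_e, and let L̃ be its reduced susceptance Laplacian with node 0 as reference. Then for all i, j ∈ {1,...,N}, the entry [L̃^{-1}]_{ij} equals the sum of the inverse susceptances 1/b_e over all edges e that lie on both the path from i to 0 and the path from j to 0 in T. -/
/-!
Write `R(v, w)` for the total resistance `∑ 1 / b_e` of the edges shared by the paths from `v`
and from `w` to the root. As a function of `v`, `R(·, w)` is the potential of a unit current
injected at `w` and extracted at the root: across an edge the potential drops by `1 / b_e` exactly
when the edge lies on the path from `w` to the root, so the current `b_e · ΔR` along each edge is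
the signed indicator of that path, and the net current leaving `v` is `[v = w] - [v = root]`.
Hence the reduced Laplacian times `R` is the identity.
-/

open Matrix

/-- The reduced susceptance Laplacian of a weighted graph on `Fin (N+1)` with
node `0` taken as the reference node (its row and column removed), where
`b e` is the susceptance of edge `e`. -/
noncomputable def reducedLap (N : ℕ) (G : SimpleGraph (Fin (N + 1)))
    [DecidableRel G.Adj] (b : Sym2 (Fin (N + 1)) → ℝ) :
    Matrix (Fin N) (Fin N) ℝ := fun i j =>
  if i = j then ∑ k : Fin (N + 1), if G.Adj i.succ k then b s(i.succ, k) else 0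
  else if G.Adj i.succ j.succ then -b s(i.succ, j.succ) else 0

namespace SimpleGraph

variable {V : Type*} {G : SimpleGraph V}

theorem IsTree.length_eq_dist (hT : G.IsTree) {u v : V} {p : G.Walk u v} (hp : p.IsPath) :
    p.length = G.dist u v := by
  obtain ⟨q, hq⟩ := hT.connected.exists_walk_length_eq_dist u v
  rw [← hq, (hT.existsUnique_path u v).unique hp (q.isPath_of_length_eq_dist hq)]

theorem Walk.IsTrail.sum_ite_mem_edges {R : Type*} [AddCommGroupWithOne R] [Fintype V]
    [DecidableEq V] {σ : V → V → R} {a c : V} {p : G.Walk a c} (hp : p.IsTrail)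
    (hσ : ∀ d ∈ p.darts, σ d.fst d.snd = 1 ∧ σ d.snd d.fst = -1) (v : V) :
    ∑ u, (if s(v, u) ∈ p.edges then σ v u else 0) =
      (if v = a then 1 else 0) - (if v = c then 1 else 0) := by
  induction p with
  | nil => simp
  | @cons a x c h rest ih =>
    rw [Walk.isTrail_cons] at hp
    simp only [Walk.darts_cons, List.mem_cons, forall_eq_or_imp] at hσ
    have hsplit : ∀ u, (if s(v, u) ∈ (Walk.cons h rest).edges then σ v u else 0) =
        (if s(v, u) = s(a, x) then σ v u else 0) + (if s(v, u) ∈ rest.edges then σ v u else 0) := by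
      intro u
      by_cases hu : s(v, u) = s(a, x)
      · simp [hu, hp.2]
      · simp [hu]
    have hedge : ∑ u, (if s(v, u) = s(a, x) then σ v u else 0) =
        (if v = a then 1 else 0) - (if v = x then 1 else 0) := by
      obtain ⟨hax, hxa⟩ := hσ.1
      by_cases hva : v = a
      · subst hva
        simp [hax, h.ne]
      · by_cases hvx : v = x
        · subst hvx
          simp [Sym2.eq_swap (a := a), hxa, hva]
        · simp [hva, hvx]
    rw [Finset.sum_congr rfl fun u _ => hsplit u, Finset.sum_add_distrib, hedge, ih hp.1 hσ.2]
    abel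

namespace IsTree

variable (hT : G.IsTree) (r : V)

noncomputable def pathTo (v : V) : G.Walk v r :=
  (hT.existsUnique_path v r).exists.choose

theorem isPath_pathTo (v : V) : (hT.pathTo r v).IsPath :=
  (hT.existsUnique_path v r).exists.choose_spec

variable {hT r}

theorem eq_pathTo {v : V} {p : G.Walk v r} (hp : p.IsPath) : p = hT.pathTo r v :=
  (hT.existsUnique_path v r).unique hp (hT.isPath_pathTo r v)

variable (hT r) in
theorem pathTo_self : hT.pathTo r r = Walk.nil :=
  (eq_pathTo Walk.IsPath.nil).symm

theorem pathTo_eq_cons_or_pathTo_eq_cons {u v : V} (h : G.Adj v u) :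
    hT.pathTo r v = .cons h (hT.pathTo r u) ∨ hT.pathTo r u = .cons h.symm (hT.pathTo r v) := by
  by_cases hv : v ∈ (hT.pathTo r u).support
  · right
    have hu : u ∉ (hT.pathTo r v).support := by
      simpa using hT.isAcyclic.ne_mem_support_of_support_of_adj_of_isPath
        (hT.isPath_pathTo r u).reverse (hT.isPath_pathTo r v).reverse h.symm (by simpa using hv)
    exact (eq_pathTo ((hT.isPath_pathTo r v).cons hu)).symm
  · exact .inl (eq_pathTo ((hT.isPath_pathTo r u).cons hv)).symm

variable (hT) in
theorem pathTo_eq_cons_of_mem_darts {a : V} {p : G.Walk a r} (hp : p.IsPath) {d : G.Dart}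
    (hd : d ∈ p.darts) : hT.pathTo r d.fst = .cons d.adj (hT.pathTo r d.snd) := by
  induction p with
  | nil => simp at hd
  | @cons a x c h rest ih =>
    rw [Walk.cons_isPath_iff] at hp
    rcases List.mem_cons.1 hd with rfl | hd
    · rw [← eq_pathTo hp.1, ← eq_pathTo (hp.1.cons hp.2)]
    · exact ih hp.1 hd

theorem dist_eq_dist_add_one_of_pathTo_eq_cons {u v : V} {h : G.Adj v u}
    (hc : hT.pathTo r v = .cons h (hT.pathTo r u)) : G.dist v r = G.dist u r + 1 := by
  rw [← hT.length_eq_dist (hT.isPath_pathTo r v), ← hT.length_eq_dist (hT.isPath_pathTo r u), hc,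
    Walk.length_cons]

variable [DecidableEq V]

variable (hT r) in
noncomputable def sharedResistance (b : Sym2 V → ℝ) (v w : V) : ℝ :=
  ∑ e ∈ (hT.pathTo r v).edges.toFinset ∩ (hT.pathTo r w).edges.toFinset, (b e)⁻¹

variable {b : Sym2 V → ℝ}

theorem sharedResistance_root_left (w : V) : hT.sharedResistance r b r w = 0 := by
  simp [sharedResistance, pathTo_self]

theorem sharedResistance_of_pathTo_eq_cons {u v : V} {h : G.Adj v u}
    (hc : hT.pathTo r v = .cons h (hT.pathTo r u)) (w : V) :
    hT.sharedResistance r b v w = hT.sharedResistance r b u w +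
      if s(v, u) ∈ (hT.pathTo r w).edges then (b s(v, u))⁻¹ else 0 := by
  have hnew : s(v, u) ∉ (hT.pathTo r u).edges := fun he => by
    have hp := hT.isPath_pathTo r v
    rw [hc, Walk.cons_isPath_iff] at hp
    exact hp.2 ((hT.pathTo r u).fst_mem_support_of_mem_edges he)
  rw [sharedResistance, sharedResistance, hc, Walk.edges_cons, List.toFinset_cons]
  split_ifs with hw
  · rw [Finset.insert_inter_of_mem (List.mem_toFinset.2 hw), Finset.sum_insert (by simp [hnew]),
      add_comm]
  · rw [Finset.insert_inter_of_notMem (by simpa using hw), add_zero]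

theorem mul_sharedResistance_sub {u v : V} (h : G.Adj v u) (hb : b s(v, u) ≠ 0) (w : V) :
    b s(v, u) * (hT.sharedResistance r b v w - hT.sharedResistance r b u w) =
      if s(v, u) ∈ (hT.pathTo r w).edges then (G.dist v r : ℝ) - G.dist u r else 0 := by
  rcases pathTo_eq_cons_or_pathTo_eq_cons h with hc | hc
  · rw [sharedResistance_of_pathTo_eq_cons hc, dist_eq_dist_add_one_of_pathTo_eq_cons hc]
    split_ifs <;> field_simp <;> push_cast <;> ring
  · rw [sharedResistance_of_pathTo_eq_cons hc, dist_eq_dist_add_one_of_pathTo_eq_cons hc,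
      Sym2.eq_swap]
    rw [Sym2.eq_swap] at hb
    split_ifs <;> field_simp <;> push_cast <;> ring

theorem sum_adj_mul_sharedResistance_sub [Fintype V] [DecidableRel G.Adj]
    (hb : ∀ e ∈ G.edgeSet, b e ≠ 0) (v w : V) :
    ∑ u, (if G.Adj v u then
        b s(v, u) * (hT.sharedResistance r b v w - hT.sharedResistance r b u w) else 0) =
      (if v = w then 1 else 0) - (if v = r then 1 else 0) := by
  have horient : ∀ d ∈ (hT.pathTo r w).darts,
      (G.dist d.fst r : ℝ) - G.dist d.snd r = 1 ∧ (G.dist d.snd r : ℝ) - G.dist d.fst r = -1 := by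
    intro d hd
    have := dist_eq_dist_add_one_of_pathTo_eq_cons
      (hT.pathTo_eq_cons_of_mem_darts (hT.isPath_pathTo r w) hd)
    constructor <;> push_cast [this] <;> ring
  rw [← (hT.isPath_pathTo r w).isTrail.sum_ite_mem_edges
    (σ := fun x y => (G.dist x r : ℝ) - G.dist y r) horient v]
  refine Finset.sum_congr rfl fun u _ => ?_
  by_cases hadj : G.Adj v u
  · rw [if_pos hadj, mul_sharedResistance_sub hadj (hb _ hadj)]
  · rw [if_neg hadj, if_neg fun he => hadj ((hT.pathTo r w).adj_of_mem_edges he)]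

end IsTree
end SimpleGraph

theorem reducedLap_apply (N : ℕ) (G : SimpleGraph (Fin (N + 1))) [DecidableRel G.Adj]
    (b : Sym2 (Fin (N + 1)) → ℝ) (i j : Fin N) :
    reducedLap N G b i j =
      (if i = j then ∑ k, if G.Adj i.succ k then b s(i.succ, k) else 0 else 0) -
        if G.Adj i.succ j.succ then b s(i.succ, j.succ) else 0 := by
  by_cases hij : i = j
  · subst hij
    simp [reducedLap]
  · simp only [reducedLap, if_neg hij, zero_sub]
    split_ifs <;> simp

theorem sum_reducedLap_mul (N : ℕ) (G : SimpleGraph (Fin (N + 1))) [DecidableRel G.Adj]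
    (b : Sym2 (Fin (N + 1)) → ℝ) {f : Fin (N + 1) → ℝ} (hf : f 0 = 0) (i : Fin N) :
    ∑ j, reducedLap N G b i j * f j.succ =
      ∑ u, if G.Adj i.succ u then b s(i.succ, u) * (f i.succ - f u) else 0 := by
  set v := i.succ
  calc ∑ j, reducedLap N G b i j * f j.succ
      = (∑ u, if G.Adj v u then b s(v, u) else 0) * f v -
          ∑ j : Fin N, (if G.Adj v j.succ then b s(v, j.succ) else 0) * f j.succ := by
        simp only [reducedLap_apply, sub_mul, Finset.sum_sub_distrib, ite_mul, zero_mul,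
          Finset.sum_ite_eq, Finset.mem_univ, if_true, v]
    _ = (∑ u, if G.Adj v u then b s(v, u) else 0) * f v -
          ∑ u, (if G.Adj v u then b s(v, u) else 0) * f u := by
        rw [Fin.sum_univ_succ (fun u => (if G.Adj v u then b s(v, u) else 0) * f u), hf,
          mul_zero, zero_add]
    _ = ∑ u, if G.Adj v u then b s(v, u) * (f v - f u) else 0 := by
        rw [Finset.sum_mul, ← Finset.sum_sub_distrib]
        congr! 1 with u
        split_ifs <;> ring

theorem stmt11 (N : ℕ) (G : SimpleGraph (Fin (N + 1))) [DecidableRel G.Adj]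
    (hT : G.IsTree) (b : Sym2 (Fin (N + 1)) → ℝ)
    (hb : ∀ e ∈ G.edgeSet, 0 < b e)
    (i j : Fin N) (p : G.Walk i.succ 0) (q : G.Walk j.succ 0)
    (hp : p.IsPath) (hq : q.IsPath) :
    (reducedLap N G b)⁻¹ i j =
      ∑ e ∈ p.edges.toFinset ∩ q.edges.toFinset, (b e)⁻¹ := by
  have hinv : reducedLap N G b * of (fun a c => hT.sharedResistance 0 b a.succ c.succ) = 1 := by
    ext a c
    rw [mul_apply, one_apply]
    simp only [of_apply]
    rw [sum_reducedLap_mul N G b (f := (hT.sharedResistance 0 b · c.succ))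
        (hT.sharedResistance_root_left c.succ) a,
      hT.sum_adj_mul_sharedResistance_sub (fun e he => (hb e he).ne')]
    simp [Fin.succ_ne_zero, Fin.succ_inj]
  rw [inv_eq_right_inv hinv, hT.eq_pathTo hp, hT.eq_pathTo hq]
  rfl
end

section
/- Let T be a tree on {0,...,N} with positive edge weights x_e = 1/b_e, such that the reference node 0 has degree exactly 1, with incident edge weight x_0. Let L̃ be the reduced susceptance Laplacian and X = L̃^{-1}. Then X_{ij} ≥ x_0 for all i, j ∈ {1,...,N}. -/
open Matrix

lemma walk_closure {V : Type*} {G : SimpleGraph V} {S : Set V}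
    (hS : ∀ a ∈ S, ∀ k, G.Adj a k → k ∈ S) {a c : V} (p : G.Walk a c) (ha : a ∈ S) :
    c ∈ S := by
  induction p with
  | nil => exact ha
  | cons h p ih => exact ih (hS _ ha _ h)

lemma mulVec_reducedLap {N : ℕ} (G : SimpleGraph (Fin (N + 1))) [DecidableRel G.Adj]
    (b : Sym2 (Fin (N + 1)) → ℝ) (v : Fin N → ℝ) (j : Fin N) :
    (reducedLap N G b).mulVec v j =
      (if G.Adj j.succ 0 then b s(j.succ, 0) * v j else 0) +
      ∑ l : Fin N, (if G.Adj j.succ l.succ then b s(j.succ, l.succ) * (v j - v l) else 0) := by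
  have hpt : ∀ k : Fin N, reducedLap N G b j k * v k =
      (if j = k then (∑ m : Fin (N + 1), if G.Adj j.succ m then b s(j.succ, m) else 0) * v j
        else 0)
      + (if G.Adj j.succ k.succ then -(b s(j.succ, k.succ) * v k) else 0) := by
    intro k
    by_cases h : j = k
    · subst h; simp [reducedLap, G.irrefl]
    · by_cases ha : G.Adj j.succ k.succ <;> simp [reducedLap, h, ha] <;> try ring
  have h1 : (reducedLap N G b).mulVec v j = ∑ k : Fin N, reducedLap N G b j k * v k := by
    simp [Matrix.mulVec, dotProduct]
  rw [h1, Finset.sum_congr rfl (fun k _ => hpt k), Finset.sum_add_distrib]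
  rw [Finset.sum_ite_eq Finset.univ j
    (fun _ => (∑ m : Fin (N + 1), if G.Adj j.succ m then b s(j.succ, m) else 0) * v j)]
  simp only [Finset.mem_univ, if_true]
  rw [Fin.sum_univ_succ, add_mul, Finset.sum_mul, add_assoc]
  congr 1
  · by_cases h0 : G.Adj j.succ 0 <;> simp [h0]
  · rw [← Finset.sum_add_distrib]
    apply Finset.sum_congr rfl
    intro l _
    by_cases ha : G.Adj j.succ l.succ <;> simp [ha] <;> ring

theorem stmt12 (N : ℕ) (G : SimpleGraph (Fin (N + 1))) [DecidableRel G.Adj]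
    (hT : G.IsTree) (x : Sym2 (Fin (N + 1)) → ℝ)
    (hx : ∀ e ∈ G.edgeSet, 0 < x e)
    (hdeg : G.degree 0 = 1)
    (e0 : Sym2 (Fin (N + 1))) (he0 : e0 ∈ G.edgeSet) (h0 : (0 : Fin (N + 1)) ∈ e0)
    (i j : Fin N) :
    x e0 ≤ (reducedLap N G (fun e => (x e)⁻¹))⁻¹ i j := by
  classical
  set b : Sym2 (Fin (N + 1)) → ℝ := fun e => (x e)⁻¹ with hb_def
  set M := reducedLap N G b with hM_def
  have hbpos : ∀ {a c : Fin (N + 1)}, G.Adj a c → 0 < b s(a, c) := by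
    intro a c h
    exact inv_pos.mpr (hx _ (G.mem_edgeSet.mpr h))
  -- the unique neighbor of 0
  have hcard : (G.neighborFinset 0).card = 1 := hdeg
  obtain ⟨w, hw⟩ := Finset.card_eq_one.mp hcard
  have hnbr : ∀ k, G.Adj 0 k ↔ k = w := by
    intro k
    rw [← SimpleGraph.mem_neighborFinset, hw, Finset.mem_singleton]
  have hw0 : w ≠ 0 := by
    intro h
    exact G.irrefl (h ▸ (hnbr w).mpr rfl)
  obtain ⟨i0, hi0⟩ := Fin.exists_succ_eq_of_ne_zero hw0
  -- identify e0
  have he0w : e0 = s(0, w) := by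
    induction e0 with
    | _ a c =>
      have hadj : G.Adj a c := G.mem_edgeSet.mp he0
      rcases Sym2.mem_iff.mp h0 with h | h
      · subst h
        rw [(hnbr c).mp hadj]
      · subst h
        rw [(hnbr a).mp hadj.symm, Sym2.eq_swap]
  -- symmetry of M
  have hsymm : Mᵀ = M := by
    ext a c
    by_cases h : a = c
    · subst h; rfl
    · rw [Matrix.transpose_apply, hM_def]
      simp only [reducedLap]
      rw [if_neg (Ne.symm h), if_neg h]
      by_cases ha : G.Adj a.succ c.succ
      · rw [if_pos ha.symm, if_pos ha, Sym2.eq_swap]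
      · rw [if_neg (fun hh => ha hh.symm), if_neg ha]
  -- kernel of M is trivial
  have hhalf : ∀ v : Fin N → ℝ, M.mulVec v = 0 → ∀ k, v k ≤ 0 := by
    intro v hv k
    by_contra hpos
    push_neg at hpos
    obtain ⟨jm, _, hmax⟩ := Finset.exists_max_image Finset.univ v ⟨k, Finset.mem_univ k⟩
    set m := v jm with hm_def
    have hm0 : 0 < m := lt_of_lt_of_le hpos (hmax k (Finset.mem_univ k))
    set S : Set (Fin (N + 1)) := {a | ∃ l : Fin N, l.succ = a ∧ v l = m} with hS_def
    have hcl : ∀ a ∈ S, ∀ k', G.Adj a k' → k' ∈ S := by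
      rintro _ ⟨l, rfl, hl⟩ k' hadj
      have hvl : M.mulVec v l = 0 := congrFun hv l
      rw [hM_def, mulVec_reducedLap] at hvl
      have hA : 0 ≤ (if G.Adj l.succ 0 then b s(l.succ, 0) * v l else 0) := by
        by_cases h : G.Adj l.succ 0
        · rw [if_pos h]; exact le_of_lt (mul_pos (hbpos h) (hl ▸ hm0))
        · rw [if_neg h]
      have hterm : ∀ l' : Fin N,
          0 ≤ (if G.Adj l.succ l'.succ then b s(l.succ, l'.succ) * (v l - v l') else 0) := by
        intro l'
        by_cases h : G.Adj l.succ l'.succ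
        · rw [if_pos h]
          exact mul_nonneg (le_of_lt (hbpos h))
            (sub_nonneg.mpr (hl ▸ hmax l' (Finset.mem_univ l')))
        · rw [if_neg h]
      have hB : 0 ≤ ∑ l' : Fin N,
          (if G.Adj l.succ l'.succ then b s(l.succ, l'.succ) * (v l - v l') else 0) :=
        Finset.sum_nonneg (fun l' _ => hterm l')
      have hAzero : (if G.Adj l.succ 0 then b s(l.succ, 0) * v l else 0) = 0 := by linarith
      have hBzero : ∑ l' : Fin N,
          (if G.Adj l.succ l'.succ then b s(l.succ, l'.succ) * (v l - v l') else 0) = 0 := by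
        linarith
      have hnadj0 : ¬ G.Adj l.succ 0 := by
        intro h
        rw [if_pos h] at hAzero
        exact absurd hAzero (ne_of_gt (mul_pos (hbpos h) (hl ▸ hm0)))
      have hk'0 : k' ≠ 0 := fun h => hnadj0 (h ▸ hadj)
      obtain ⟨l', hl'⟩ := Fin.exists_succ_eq_of_ne_zero hk'0
      have := (Finset.sum_eq_zero_iff_of_nonneg (fun l' _ => hterm l')).mp hBzero l'
        (Finset.mem_univ l')
      rw [if_pos (hl' ▸ hadj)] at this
      have hbne : b s(l.succ, l'.succ) ≠ 0 := ne_of_gt (hbpos (hl' ▸ hadj))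
      have : v l - v l' = 0 := by
        rcases mul_eq_zero.mp this with h | h
        · exact absurd h hbne
        · exact h
      exact ⟨l', hl', by linarith [hl]⟩
    obtain ⟨p⟩ := (hT.isConnected jm.succ 0 : G.Reachable jm.succ 0)
    obtain ⟨l, hl, -⟩ := walk_closure hcl p ⟨jm, rfl, rfl⟩
    exact Fin.succ_ne_zero l hl
  have hker : ∀ v : Fin N → ℝ, M.mulVec v = 0 → v = 0 := by
    intro v hv
    funext k
    have h1 := hhalf v hv k
    have h2 : M.mulVec (-v) = 0 := by rw [Matrix.mulVec_neg, hv, neg_zero]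
    have h3 := hhalf (-v) h2 k
    simp only [Pi.neg_apply, neg_nonpos] at h3
    exact le_antisymm h1 (by simpa using h3)
  -- invertibility
  have hdet : IsUnit M.det := by
    rw [isUnit_iff_ne_zero]
    intro hdet0
    obtain ⟨v, hv, hv0⟩ := (Matrix.exists_mulVec_eq_zero_iff (M := M)).mpr hdet0
    exact hv (hker v hv0)
  have hMX : M * M⁻¹ = 1 := Matrix.mul_nonsing_inv M hdet
  have hXM : M⁻¹ * M = 1 := Matrix.nonsing_inv_mul M hdet
  set X := M⁻¹ with hX_def
  have hXsymm : ∀ a c, X a c = X c a := by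
    intro a c
    have : Xᵀ = X := by
      rw [hX_def, Matrix.transpose_nonsing_inv, hsymm]
    calc X a c = Xᵀ c a := rfl
      _ = X c a := by rw [this]
  -- column fact : X k i0 = x e0
  have hadj0w : G.Adj 0 w := (hnbr w).mpr rfl
  have hcol : ∀ k : Fin N, X k i0 = x e0 := by
    intro k
    have h1 : M.mulVec (fun _ => (1 : ℝ)) = fun l => if l = i0 then (x e0)⁻¹ else 0 := by
      funext l
      rw [hM_def, mulVec_reducedLap]
      have h2 : ∑ l' : Fin N,
          (if G.Adj l.succ l'.succ then b s(l.succ, l'.succ) * ((1:ℝ) - 1) else 0) = 0 :=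
        Finset.sum_eq_zero (fun l' _ => by by_cases h : G.Adj l.succ l'.succ <;> simp [h])
      rw [h2, add_zero]
      have hiff : G.Adj l.succ 0 ↔ l = i0 := by
        constructor
        · intro h
          have := (hnbr l.succ).mp h.symm
          rw [← hi0] at this
          exact Fin.succ_injective _ this
        · intro h
          subst h
          rw [hi0]
          exact hadj0w.symm
      by_cases h : G.Adj l.succ 0
      · rw [if_pos h, if_pos (hiff.mp h), mul_one]
        have : l.succ = w := by rw [← hi0, hiff.mp h]
        rw [this, he0w, hb_def]
        congr 1
        rw [Sym2.eq_swap]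
      · rw [if_neg h, if_neg (fun hh => h (hiff.mpr hh))]
    have h3 : X.mulVec (M.mulVec (fun _ => (1 : ℝ))) = fun _ => (1 : ℝ) := by
      rw [Matrix.mulVec_mulVec, hXM]
      funext l
      simp [Matrix.mulVec, dotProduct, Matrix.one_apply]
    rw [h1] at h3
    have h4 := congrFun h3 k
    have h5 : X.mulVec (fun l => if l = i0 then (x e0)⁻¹ else 0) k = X k i0 * (x e0)⁻¹ := by
      simp only [Matrix.mulVec, dotProduct]
      rw [Finset.sum_eq_single i0]
      · rw [if_pos rfl]
      · intro c _ hc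
        rw [if_neg hc, mul_zero]
      · intro h
        exact absurd (Finset.mem_univ i0) h
    rw [h5] at h4
    have hxe0 : x e0 ≠ 0 := ne_of_gt (hx e0 he0)
    exact (mul_inv_eq_one₀ hxe0).mp h4
  -- row fact : M.mulVec (row i of X) = e_i
  set u : Fin N → ℝ := fun k => X i k with hu_def
  have hrow : ∀ l, M.mulVec u l = if l = i then 1 else 0 := by
    intro l
    have : M.mulVec u l = (M * X) l i := by
      simp only [Matrix.mulVec, dotProduct, Matrix.mul_apply, hu_def]
      exact Finset.sum_congr rfl (fun c _ => by rw [hXsymm i c])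
    rw [this, hMX, Matrix.one_apply]
  -- minimum principle
  have hmain : ∀ k, x e0 ≤ u k := by
    by_contra hcon
    push_neg at hcon
    obtain ⟨k, hk⟩ := hcon
    obtain ⟨jm, _, hmin⟩ := Finset.exists_min_image Finset.univ u ⟨k, Finset.mem_univ k⟩
    set m := u jm with hm_def
    have hmlt : m < x e0 := lt_of_le_of_lt (hmin k (Finset.mem_univ k)) hk
    set S : Set (Fin (N + 1)) := {a | ∃ l : Fin N, l.succ = a ∧ u l = m} with hS_def
    have hcl : ∀ a ∈ S, ∀ k', G.Adj a k' → k' ∈ S := by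
      rintro _ ⟨l, rfl, hl⟩ k' hadj
      have hne : l ≠ i0 := by
        intro h
        have h1 : u i0 = m := h ▸ hl
        have h2 : u i0 = x e0 := hcol i
        rw [h2] at h1
        exact (ne_of_lt hmlt) h1.symm
      have hnadj0 : ¬ G.Adj l.succ 0 := by
        intro h
        have := (hnbr l.succ).mp h.symm
        rw [← hi0] at this
        exact hne (Fin.succ_injective _ this)
      have hvl : M.mulVec u l = if l = i then 1 else 0 := hrow l
      rw [hM_def, mulVec_reducedLap, if_neg hnadj0, zero_add] at hvl
      have hterm : ∀ l' : Fin N,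
          (if G.Adj l.succ l'.succ then b s(l.succ, l'.succ) * (u l - u l') else 0) ≤ 0 := by
        intro l'
        by_cases h : G.Adj l.succ l'.succ
        · rw [if_pos h]
          exact mul_nonpos_of_nonneg_of_nonpos (le_of_lt (hbpos h))
            (sub_nonpos.mpr (hl ▸ hmin l' (Finset.mem_univ l')))
        · rw [if_neg h]
      have hB : ∑ l' : Fin N,
          (if G.Adj l.succ l'.succ then b s(l.succ, l'.succ) * (u l - u l') else 0) ≤ 0 :=
        Finset.sum_nonpos (fun l' _ => hterm l')
      have hge : (0:ℝ) ≤ if l = i then 1 else 0 := by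
        by_cases h : l = i <;> simp [h]
      have hBzero : ∑ l' : Fin N,
          (if G.Adj l.succ l'.succ then b s(l.succ, l'.succ) * (u l - u l') else 0) = 0 := by
        apply le_antisymm hB
        rw [hvl]
        exact hge
      have hall := (Finset.sum_eq_zero_iff_of_nonpos (fun l' _ => hterm l')).mp hBzero
      have hk'0 : k' ≠ 0 := fun h => hnadj0 (h ▸ hadj)
      obtain ⟨l', hl'⟩ := Fin.exists_succ_eq_of_ne_zero hk'0
      have hz := hall l' (Finset.mem_univ l')
      rw [if_pos (hl' ▸ hadj)] at hz
      have hbne : b s(l.succ, l'.succ) ≠ 0 := ne_of_gt (hbpos (hl' ▸ hadj))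
      have : u l - u l' = 0 := by
        rcases mul_eq_zero.mp hz with h | h
        · exact absurd h hbne
        · exact h
      exact ⟨l', hl', by linarith [hl]⟩
    obtain ⟨p⟩ := (hT.isConnected jm.succ 0 : G.Reachable jm.succ 0)
    obtain ⟨l, hl, -⟩ := walk_closure hcl p ⟨jm, rfl, rfl⟩
    exact Fin.succ_ne_zero l hl
  exact hmain j
end

section
/- Let T be a spanning tree of a connected weighted graph Ĝ with positive edge weights x, and let f be the total edge weight of a maximum-weight spanning tree of Ĝ. Let X = L̃^{-1} be the inverse reduced susceptance Laplacian of T (reference node 0, susceptances b_e = 1/x_e). Then X_{ii} ≤ f for every i ∈ {1,...,N}. -/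
open Matrix
open SimpleGraph Finset

section aux
variable {N : ℕ} (T : SimpleGraph (Fin (N + 1))) [DecidableRel T.Adj]
  (b : Sym2 (Fin (N + 1)) → ℝ)

/-- extend a vector on `Fin N` by `0` at node `0` -/
noncomputable def ext0 {N : ℕ} (v : Fin N → ℝ) : Fin (N + 1) → ℝ := Fin.cons (α := fun _ => ℝ) 0 v

@[simp] lemma ext0_zero {N : ℕ} (v : Fin N → ℝ) : ext0 v 0 = 0 := Fin.cons_zero _ _
@[simp] lemma ext0_succ {N : ℕ} (v : Fin N → ℝ) (i : Fin N) : ext0 v i.succ = v i :=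
  Fin.cons_succ _ _ _

/-- per-edge energy term -/
noncomputable def edgeTerm (u : Fin (N + 1) → ℝ) : Sym2 (Fin (N + 1)) → ℝ :=
  Sym2.lift ⟨fun a c => b s(a, c) * (u a - u c) ^ 2, fun a c => by
    simp only []; rw [Sym2.eq_swap]; ring⟩

lemma edgeTerm_mk (u : Fin (N + 1) → ℝ) (a c : Fin (N + 1)) :
    edgeTerm b u s(a, c) = b s(a, c) * (u a - u c) ^ 2 := rfl

/-- weight function on ordered pairs -/
noncomputable def wt (a c : Fin (N + 1)) : ℝ := if T.Adj a c then b s(a, c) else 0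

lemma wt_symm (a c : Fin (N + 1)) : wt T b a c = wt T b c a := by
  unfold wt
  rw [Sym2.eq_swap]
  simp [adj_comm]

lemma wt_self (a : Fin (N + 1)) : wt T b a a = 0 := by simp [wt]

/-- dart sum equals twice edge sum -/
lemma dart_sum_eq (F : Sym2 (Fin (N + 1)) → ℝ) :
    ∑ d : T.Dart, F d.edge = 2 * ∑ e ∈ T.edgeFinset, F e := by
  classical
  rw [← Finset.sum_fiberwise_of_maps_to (g := Dart.edge) (t := T.edgeFinset)
    (fun d _ => by rw [mem_edgeFinset]; exact d.edge_mem)]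
  rw [Finset.mul_sum]
  refine Finset.sum_congr rfl fun e he => ?_
  rw [Finset.sum_congr rfl (fun d hd => ?_), Finset.sum_const,
    T.dart_edge_fiber_card e (mem_edgeFinset.mp he)]
  · simp [two_mul]; ring
  · simp only [Finset.mem_filter] at hd
    rw [hd.2]

/-- double sum equals dart sum -/
lemma double_sum_eq (H : Fin (N + 1) → Fin (N + 1) → ℝ) :
    ∑ a : Fin (N + 1), ∑ c : Fin (N + 1), (if T.Adj a c then H a c else 0)
      = ∑ d : T.Dart, H d.fst d.snd := by
  classical
  rw [show (∑ a : Fin (N + 1), ∑ c : Fin (N + 1), if T.Adj a c then H a c else 0)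
      = ∑ p : Fin (N + 1) × Fin (N + 1), (if T.Adj p.1 p.2 then H p.1 p.2 else 0) from
    (Fintype.sum_prod_type (fun p => if T.Adj p.1 p.2 then H p.1 p.2 else 0)).symm]
  rw [← Finset.sum_filter]
  refine Finset.sum_bij'
    (i := fun (p : Fin (N+1) × Fin (N+1)) (hp : p ∈ Finset.univ.filter fun p => T.Adj p.1 p.2)
      => (⟨p, by simpa using (Finset.mem_filter.mp hp).2⟩ : T.Dart))
    (j := fun (d : T.Dart) _ => d.toProd) ?_ ?_ ?_ ?_ ?_
  · intros; exact Finset.mem_univ _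
  · intro d _; simp [d.adj]
  · intro p hp; rfl
  · intro d _; rfl
  · intro p hp; rfl

end aux

section quad
variable {N : ℕ} (T : SimpleGraph (Fin (N + 1))) [DecidableRel T.Adj]
  (b : Sym2 (Fin (N + 1)) → ℝ)

lemma mulVec_reducedLap_s14 (v : Fin N → ℝ) (i : Fin N) :
    (reducedLap N T b *ᵥ v) i
      = ∑ k : Fin (N + 1), wt T b i.succ k * (ext0 v i.succ - ext0 v k) := by
  classical
  have hM : ∀ j, reducedLap N T b i j
      = (if i = j then (∑ k : Fin (N + 1), wt T b i.succ k) else 0) - wt T b i.succ j.succ := by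
    intro j
    by_cases h : i = j
    · subst h
      simp [reducedLap, wt, T.irrefl]
    · simp only [reducedLap, wt, if_neg h]
      split <;> simp
  have : (reducedLap N T b *ᵥ v) i = ∑ j : Fin N,
      ((if i = j then (∑ k : Fin (N + 1), wt T b i.succ k) else 0) - wt T b i.succ j.succ) * v j := by
    simp only [mulVec, dotProduct]
    exact Finset.sum_congr rfl fun j _ => by rw [hM j]
  rw [this]
  simp only [sub_mul, Finset.sum_sub_distrib, ite_mul, zero_mul, Finset.sum_ite_eq,
    Finset.mem_univ, if_true]
  rw [Fin.sum_univ_succ (f := fun k => wt T b i.succ k * (ext0 v i.succ - ext0 v k))]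
  simp only [ext0_zero, ext0_succ, sub_zero, mul_sub, Finset.sum_sub_distrib,
    Finset.sum_mul]
  rw [Fin.sum_univ_succ (f := fun k => wt T b i.succ k * v i)]
  ring

lemma quad_eq (v : Fin N → ℝ) :
    v ⬝ᵥ (reducedLap N T b *ᵥ v)
      = ∑ e ∈ T.edgeFinset, edgeTerm b (ext0 v) e := by
  classical
  set u : Fin (N + 1) → ℝ := ext0 v with hu
  have h1 : v ⬝ᵥ (reducedLap N T b *ᵥ v)
      = ∑ a : Fin (N + 1), ∑ k : Fin (N + 1), wt T b a k * (u a * (u a - u k)) := by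
    rw [Fin.sum_univ_succ
      (f := fun a => ∑ k : Fin (N + 1), wt T b a k * (u a * (u a - u k)))]
    simp only [hu, ext0_zero, zero_mul, mul_zero, Finset.sum_const_zero, zero_add]
    unfold dotProduct
    refine Finset.sum_congr rfl fun i _ => ?_
    rw [mulVec_reducedLap_s14, Finset.mul_sum]
    refine Finset.sum_congr rfl fun k _ => ?_
    simp only [ext0_succ]
    ring
  have h2 : ∀ a k, wt T b a k * (u a * (u a - u k)) + wt T b k a * (u k * (u k - u a))
      = wt T b a k * (u a - u k) ^ 2 := by
    intro a k
    rw [wt_symm T b k a]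
    ring
  have h3 : v ⬝ᵥ (reducedLap N T b *ᵥ v) + v ⬝ᵥ (reducedLap N T b *ᵥ v)
      = ∑ a : Fin (N + 1), ∑ k : Fin (N + 1), wt T b a k * (u a - u k) ^ 2 := by
    nth_rewrite 2 [h1]
    rw [Finset.sum_comm]
    rw [h1, ← Finset.sum_add_distrib]
    refine Finset.sum_congr rfl fun a _ => ?_
    rw [← Finset.sum_add_distrib]
    exact Finset.sum_congr rfl fun k _ => h2 a k
  have h4 : ∑ a : Fin (N + 1), ∑ k : Fin (N + 1), wt T b a k * (u a - u k) ^ 2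
      = 2 * ∑ e ∈ T.edgeFinset, edgeTerm b u e := by
    rw [← dart_sum_eq T (edgeTerm b u)]
    have hL : ∑ a : Fin (N + 1), ∑ k : Fin (N + 1), wt T b a k * (u a - u k) ^ 2
        = ∑ a : Fin (N + 1), ∑ c : Fin (N + 1),
            (if T.Adj a c then b s(a, c) * (u a - u c) ^ 2 else 0) := by
      refine Finset.sum_congr rfl fun a _ => Finset.sum_congr rfl fun k _ => ?_
      unfold wt
      split <;> simp
    rw [hL, double_sum_eq T (fun a k => b s(a, k) * (u a - u k) ^ 2)]
    rfl
  linarith [h3, h4]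

end quad

section walk
variable {N : ℕ} {T : SimpleGraph (Fin (N + 1))} [DecidableRel T.Adj]

lemma walk_telescope (u : Fin (N + 1) → ℝ) {a c : Fin (N + 1)} (p : T.Walk a c) :
    u c - u a = (p.darts.map (fun d => u d.snd - u d.fst)).sum := by
  induction p with
  | nil => simp
  | cons h q ih => simp only [Walk.darts_cons, List.map_cons, List.sum_cons, ← ih]; ring

lemma path_ineq (x : Sym2 (Fin (N + 1)) → ℝ) (hx : ∀ e ∈ T.edgeSet, 0 < x e)
    (u : Fin (N + 1) → ℝ) {a c : Fin (N + 1)} (p : T.Walk a c) (hp : p.IsPath) :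
    2 * (u c - u a) ≤ ∑ e ∈ T.edgeFinset, edgeTerm (fun e => (x e)⁻¹) u e
      + ∑ e ∈ T.edgeFinset, x e := by
  classical
  have hdart : ∀ d ∈ p.darts, 2 * (u d.snd - u d.fst)
      ≤ edgeTerm (fun e => (x e)⁻¹) u d.edge + x d.edge := by
    intro d hd
    have he : d.edge ∈ T.edgeSet := d.edge_mem
    have hxe : 0 < x d.edge := hx _ he
    have : edgeTerm (fun e => (x e)⁻¹) u d.edge
        = (x d.edge)⁻¹ * (u d.fst - u d.snd) ^ 2 := rfl
    rw [this]
    have key : (x d.edge)⁻¹ * (u d.fst - u d.snd) ^ 2 + x d.edge - 2 * (u d.snd - u d.fst)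
        = (x d.edge)⁻¹ * ((u d.fst - u d.snd) + x d.edge) ^ 2 := by
      field_simp
      ring
    nlinarith [mul_nonneg (inv_pos.mpr hxe).le (sq_nonneg ((u d.fst - u d.snd) + x d.edge)), key]
  have h1 : 2 * (u c - u a) ≤ (p.darts.map
      (fun d => edgeTerm (fun e => (x e)⁻¹) u d.edge + x d.edge)).sum := by
    rw [walk_telescope u p, ← List.sum_map_mul_left]
    exact List.sum_le_sum hdart
  have h2 : (p.darts.map
        (fun d => edgeTerm (fun e => (x e)⁻¹) u d.edge + x d.edge)).sum
      = (p.edges.map (edgeTerm (fun e => (x e)⁻¹) u)).sum + (p.edges.map x).sum := by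
    rw [Walk.edges, List.map_map, List.map_map, ← List.sum_map_add]
    rfl
  have hsub : p.edges.toFinset ⊆ T.edgeFinset := fun e he => by
    rw [SimpleGraph.mem_edgeFinset]
    exact p.edges_subset_edgeSet (List.mem_toFinset.mp he)
  have hnd := hp.edges_nodup
  have h3 : (p.edges.map (edgeTerm (fun e => (x e)⁻¹) u)).sum
      ≤ ∑ e ∈ T.edgeFinset, edgeTerm (fun e => (x e)⁻¹) u e := by
    rw [← List.sum_toFinset _ hnd]
    refine Finset.sum_le_sum_of_subset_of_nonneg hsub fun e he _ => ?_
    have hxe : 0 < x e := hx e (SimpleGraph.mem_edgeFinset.mp he)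
    induction e with
    | _ a c =>
      rw [edgeTerm_mk]
      positivity
  have h4 : (p.edges.map x).sum ≤ ∑ e ∈ T.edgeFinset, x e := by
    rw [← List.sum_toFinset _ hnd]
    refine Finset.sum_le_sum_of_subset_of_nonneg hsub fun e he _ =>
      (hx e (SimpleGraph.mem_edgeFinset.mp he)).le
  linarith [h1, h2 ▸ h1, h3, h4]

end walk

section det
variable {N : ℕ} (T : SimpleGraph (Fin (N + 1))) [DecidableRel T.Adj]

lemma edgeTerm_nonneg (b : Sym2 (Fin (N + 1)) → ℝ) (u : Fin (N + 1) → ℝ)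
    (e : Sym2 (Fin (N + 1))) (hbe : 0 ≤ b e) : 0 ≤ edgeTerm b u e := by
  induction e with
  | _ a c =>
    rw [edgeTerm_mk]
    exact mul_nonneg hbe (sq_nonneg _)

lemma reducedLap_det_ne_zero (hT : T.Connected) (b : Sym2 (Fin (N + 1)) → ℝ)
    (hb : ∀ e ∈ T.edgeSet, 0 < b e) : (reducedLap N T b).det ≠ 0 := by
  classical
  intro hdet
  obtain ⟨v, hv0, hMv⟩ := (Matrix.exists_mulVec_eq_zero_iff).mpr hdet
  have hQ : ∑ e ∈ T.edgeFinset, edgeTerm b (ext0 v) e = 0 := by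
    rw [← quad_eq, hMv, dotProduct_zero]
  have hterm : ∀ e ∈ T.edgeFinset, edgeTerm b (ext0 v) e = 0 := by
    rw [← Finset.sum_eq_zero_iff_of_nonneg
      (fun e he => edgeTerm_nonneg b (ext0 v) e (hb e (SimpleGraph.mem_edgeFinset.mp he)).le)]
    exact hQ
  have hadj : ∀ a c, T.Adj a c → ext0 v a = ext0 v c := by
    intro a c h
    have he : s(a, c) ∈ T.edgeFinset := SimpleGraph.mem_edgeFinset.mpr h
    have h0 := hterm _ he
    rw [edgeTerm_mk] at h0
    rcases mul_eq_zero.mp h0 with h1 | h1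
    · exact absurd h1 (hb _ h).ne'
    · have := pow_eq_zero_iff (n := 2) (by norm_num) |>.mp h1
      linarith [this]
  have hwalk : ∀ {a c : Fin (N + 1)} (_ : T.Walk a c), ext0 v a = ext0 v c := by
    intro a c p
    induction p with
    | nil => rfl
    | cons h q ih => exact (hadj _ _ h).trans ih
  apply hv0
  funext k
  have := hwalk ((hT.preconnected k.succ 0).some)
  simpa using this

end det

theorem stmt14 (N : ℕ) (G T : SimpleGraph (Fin (N + 1))) [DecidableRel T.Adj]
    (hG : G.Connected) (hTG : T ≤ G) (hT : T.IsTree)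
    (x : Sym2 (Fin (N + 1)) → ℝ) (hx : ∀ e ∈ G.edgeSet, 0 < x e)
    (f : ℝ)
    (hf : IsGreatest {w : ℝ | ∃ T' : SimpleGraph (Fin (N + 1)),
      T' ≤ G ∧ T'.IsTree ∧ w = ∑ e ∈ T'.edgeSet.toFinite.toFinset, x e} f)
    (i : Fin N) :
    (reducedLap N T (fun e => (x e)⁻¹))⁻¹ i i ≤ f := by
  classical
  set b : Sym2 (Fin (N + 1)) → ℝ := fun e => (x e)⁻¹ with hbdef
  have hxT : ∀ e ∈ T.edgeSet, 0 < x e := fun e he =>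
    hx e (SimpleGraph.edgeSet_mono hTG he)
  have hbT : ∀ e ∈ T.edgeSet, 0 < b e := fun e he => inv_pos.mpr (hxT e he)
  have hdet := reducedLap_det_ne_zero T hT.isConnected b hbT
  set M := reducedLap N T b with hM
  set v : Fin N → ℝ := fun k => M⁻¹ k i with hv
  have hMv : M *ᵥ v = Pi.single i 1 := by
    funext j
    have hMM : M * M⁻¹ = 1 := Matrix.mul_nonsing_inv M (isUnit_iff_ne_zero.mpr hdet)
    have : (M *ᵥ v) j = (M * M⁻¹) j i := by
      simp [mulVec, dotProduct, Matrix.mul_apply, hv]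
    rw [this, hMM, Matrix.one_apply]
    simp [Pi.single_apply]
  have hQ : v ⬝ᵥ (M *ᵥ v) = v i := by rw [hMv]; simp
  have hquad := quad_eq T b v
  obtain p0 := (hT.isConnected.preconnected 0 i.succ).some
  have hineq := path_ineq x hxT (ext0 v) (p0.toPath : T.Walk 0 i.succ) p0.toPath.isPath
  simp only [ext0_succ, ext0_zero, sub_zero] at hineq
  have hW : ∑ e ∈ T.edgeSet.toFinite.toFinset, x e = ∑ e ∈ T.edgeFinset, x e := by
    refine Finset.sum_congr ?_ fun _ _ => rfl
    ext e
    simp only [Set.Finite.mem_toFinset, SimpleGraph.mem_edgeFinset]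
  have hWf : ∑ e ∈ T.edgeFinset, x e ≤ f := by
    rw [← hW]
    exact hf.2 ⟨T, hTG, hT, rfl⟩
  have : M⁻¹ i i = v i := rfl
  rw [hM] at this ⊢  -- maybe unnecessary
  linarith [hineq, hQ, hquad, hWf, hquad ▸ hQ]
end

section
/- Let T be a spanning tree of a connected weighted graph Ĝ with positive edge weights x, let f be the maximum spanning tree weight of Ĝ and x_min the minimum edge weight in Ĝ. Let X = L̃^{-1} be the inverse reduced Laplacian of T with reference 0. Then X_{ij} ≤ f - x_min for all i ≠ j in {1,...,N}. -/
open Matrix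

/-! Root `T` at `0` and let `P v` be its path from `0` to `v`. The inverse of the reduced
Laplacian is `X t v = ∑ x e` over the edges common to `P t` and `P v`: for fixed `t`,
`v ↦ X t v` is the potential of a unit current entering at `t` and leaving at `0`, which
flows along `P t`, so across each tree edge the potential drops by `±x e` or `0`, and
Kirchhoff's law at every `w ≠ 0` reads `(X L̃) t w = [w = t]`. For `t ≠ v` the last edge of
`P t` or of `P v` is not common to both (otherwise each endpoint would lie strictly before
the other on its path), so `X t v ≤ weight T - x_min ≤ f - x_min`. -/

open Finset

namespace SimpleGraph

namespace Walk

variable {V : Type*} [Fintype V] [DecidableEq V] {G : SimpleGraph V}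

lemma IsPath.card_filter_start_mem_edges {a b : V} {p : G.Walk a b} (hp : p.IsPath) :
    #{v | s(a, v) ∈ p.edges} = if a = b then 0 else 1 := by
  cases p with
  | nil => simp
  | @cons _ c _ h q =>
    rw [cons_isPath_iff] at hp
    have hab : a ≠ b := fun hab => hp.2 (hab ▸ q.end_mem_support)
    have hfilter : ({v | s(a, v) ∈ (cons h q).edges} : Finset V) = {c} := by
      ext v
      simp only [mem_filter, mem_univ, true_and, mem_singleton, edges_cons, List.mem_cons,
        Sym2.congr_right]
      exact ⟨fun h' => h'.resolve_right fun hv => hp.2 (q.fst_mem_support_of_mem_edges hv),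
        Or.inl⟩
    rw [hfilter, if_neg hab, card_singleton]

lemma IsPath.card_filter_end_mem_edges {a b : V} {p : G.Walk a b} (hp : p.IsPath) :
    #{v | s(b, v) ∈ p.edges} = if a = b then 0 else 1 := by
  simpa [eq_comm] using hp.reverse.card_filter_start_mem_edges

end Walk

namespace IsTree

variable {V : Type*} {T : SimpleGraph V} (hT : T.IsTree)

noncomputable def path (r v : V) : T.Walk r v := (hT.existsUnique_path r v).choose

lemma isPath_path (r v : V) : (hT.path r v).IsPath := (hT.existsUnique_path r v).choose_spec.1

variable {hT} in
lemma eq_path {r v : V} {p : T.Walk r v} (hp : p.IsPath) : p = hT.path r v :=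
  (hT.existsUnique_path r v).choose_spec.2 p hp

lemma path_self (r : V) : hT.path r r = .nil := (eq_path .nil).symm

variable [DecidableEq V]

lemma takeUntil_path {r u v : V} (h : u ∈ (hT.path r v).support) :
    (hT.path r v).takeUntil u h = hT.path r u :=
  eq_path ((hT.isPath_path r v).takeUntil h)

lemma edges_path_of_mem_support {r u v : V} (huv : T.Adj u v)
    (hv : v ∈ (hT.path r u).support) :
    (hT.path r u).edges = (hT.path r v).edges ++ [s(v, u)] := by
  have hdrop : (hT.path r u).dropUntil v hv = huv.symm.toWalk :=
    (hT.existsUnique_path v u).unique ((hT.isPath_path r u).dropUntil hv) huv.symm.isPath_toWalk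
  conv_lhs => rw [← (hT.path r u).take_spec hv]
  rw [Walk.edges_append, hdrop, takeUntil_path]
  rfl

lemma mem_edges_path_or {r u v : V} (huv : T.Adj u v) :
    s(u, v) ∈ (hT.path r u).edges ∨ s(u, v) ∈ (hT.path r v).edges := by
  by_cases hv : v ∈ (hT.path r u).support
  · left
    simp [hT.edges_path_of_mem_support huv hv, Sym2.eq_swap]
  · right
    rw [← eq_path ((hT.isPath_path r u).concat hv huv), Walk.edges_concat]
    simp

lemma length_path_lt {r u v : V} (hu : u ∈ (hT.path r v).support) (huv : u ≠ v) :
    (hT.path r u).length < (hT.path r v).length :=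
  hT.takeUntil_path hu ▸ Walk.length_takeUntil_lt_length hu huv

lemma exists_edge_not_mem_path {r u v : V} (hu : u ≠ r) (hv : v ≠ r) (huv : u ≠ v) :
    ∃ e ∈ T.edgeSet, ¬(e ∈ (hT.path r u).edges ∧ e ∈ (hT.path r v).edges) := by
  have last_mem (w : V) (hw : w ≠ r) : s((hT.path r w).penultimate, w) ∈ (hT.path r w).edges :=
    Walk.mk_penultimate_end_mem_edges (Walk.not_nil_of_ne hw.symm)
  by_contra! h
  have hu' := (hT.path r v).snd_mem_support_of_mem_edges
    (h _ ((hT.path r u).edges_subset_edgeSet (last_mem u hu))).2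
  have hv' := (hT.path r u).snd_mem_support_of_mem_edges
    (h _ ((hT.path r v).edges_subset_edgeSet (last_mem v hv))).1
  exact (hT.length_path_lt hu' huv).not_gt (hT.length_path_lt hv' huv.symm)

noncomputable def commonPathWeight (r : V) (x : Sym2 V → ℝ) (u v : V) : ℝ :=
  (((hT.path r v).edges.filter (· ∈ (hT.path r u).edges)).map x).sum

variable {r : V} {x : Sym2 V → ℝ}

lemma commonPathWeight_root (u : V) : hT.commonPathWeight r x u r = 0 := by
  simp [commonPathWeight, path_self]

lemma commonPathWeight_of_mem_edges (t : V) {u v : V} (h : s(u, v) ∈ (hT.path r u).edges) :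
    hT.commonPathWeight r x t u =
      hT.commonPathWeight r x t v + if s(u, v) ∈ (hT.path r t).edges then x s(u, v) else 0 := by
  have huv : T.Adj u v := (hT.path r u).adj_of_mem_edges h
  rw [commonPathWeight, hT.edges_path_of_mem_support huv
    ((hT.path r u).snd_mem_support_of_mem_edges h), Sym2.eq_swap]
  split_ifs <;> simp_all [commonPathWeight]

lemma commonPathWeight_sub_mul_inv {t w v : V} (hwv : T.Adj w v) (hx : x s(w, v) ≠ 0) :
    (hT.commonPathWeight r x t w - hT.commonPathWeight r x t v) * (x s(w, v))⁻¹ =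
      if s(w, v) ∈ (hT.path r t).edges then
        (if s(w, v) ∈ (hT.path r w).edges then 1 else -1) else 0 := by
  by_cases hw : s(w, v) ∈ (hT.path r w).edges
  · rw [hT.commonPathWeight_of_mem_edges t hw]
    split_ifs <;> field_simp <;> ring
  · have hv : s(v, w) ∈ (hT.path r v).edges := by
      rw [Sym2.eq_swap]; exact (hT.mem_edges_path_or hwv).resolve_left hw
    rw [hT.commonPathWeight_of_mem_edges t hv, Sym2.eq_swap]
    split_ifs <;> field_simp <;> ring

variable [Fintype V]

lemma sum_signed_incidence_path {t w : V} (hw : w ≠ r) :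
    ∑ v, (if s(w, v) ∈ (hT.path r t).edges then
        (if s(w, v) ∈ (hT.path r w).edges then 1 else -1) else 0 : ℝ) =
      if w = t then 1 else 0 := by
  by_cases hwt : w ∈ (hT.path r t).support
  · -- `P t` is `P w` followed by a path leaving `w` (empty iff `w = t`)
    set d := (hT.path r t).dropUntil w hwt
    have hsplit : (hT.path r t).edges = (hT.path r w).edges ++ d.edges := by
      rw [← hT.takeUntil_path hwt, ← Walk.edges_append, Walk.take_spec]
    have hdisj : (hT.path r w).edges.Disjoint d.edges := by
      have := (hT.isPath_path r t).edges_nodup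
      rw [hsplit] at this
      exact List.disjoint_of_nodup_append this
    have hterm : ∀ v, (if s(w, v) ∈ (hT.path r t).edges then
        (if s(w, v) ∈ (hT.path r w).edges then 1 else -1) else 0 : ℝ) =
        (if s(w, v) ∈ (hT.path r w).edges then 1 else 0) -
          (if s(w, v) ∈ d.edges then 1 else 0) := by
      intro v
      rw [hsplit]
      by_cases h₁ : s(w, v) ∈ (hT.path r w).edges
      · rw [if_pos h₁, if_neg (hdisj h₁)]
        simp [h₁]
      · by_cases h₂ : s(w, v) ∈ d.edges <;> simp [h₁, h₂]
    have hd : d.IsPath := (hT.isPath_path r t).dropUntil hwt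
    simp only [hterm, sum_sub_distrib, sum_boole, (hT.isPath_path r w).card_filter_end_mem_edges,
      hd.card_filter_start_mem_edges, if_neg hw.symm]
    split_ifs <;> norm_num
  · have hwt' : w ≠ t := fun h => hwt (h ▸ Walk.end_mem_support _)
    rw [if_neg hwt']
    refine sum_eq_zero fun v _ => if_neg fun h => hwt ?_
    exact (hT.path r t).fst_mem_support_of_mem_edges h

lemma sum_adj_commonPathWeight_sub_mul_inv [DecidableRel T.Adj]
    (hx : ∀ e ∈ T.edgeSet, x e ≠ 0) {t w : V} (hw : w ≠ r) :
    ∑ v, (if T.Adj w v then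
        (hT.commonPathWeight r x t w - hT.commonPathWeight r x t v) * (x s(w, v))⁻¹ else 0) =
      if w = t then 1 else 0 := by
  rw [← hT.sum_signed_incidence_path hw]
  refine sum_congr rfl fun v _ => ?_
  by_cases hwv : T.Adj w v
  · rw [if_pos hwv, hT.commonPathWeight_sub_mul_inv hwv (hx _ hwv)]
  · rw [if_neg hwv, if_neg fun h => hwv ((hT.path r t).adj_of_mem_edges h)]

lemma exists_commonPathWeight_le [DecidableRel T.Adj] (hx : ∀ e ∈ T.edgeSet, 0 ≤ x e)
    {u v : V} (hu : u ≠ r) (hv : v ≠ r) (huv : u ≠ v) :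
    ∃ e ∈ T.edgeSet, hT.commonPathWeight r x u v ≤ ∑ e ∈ T.edgeFinset, x e - x e := by
  obtain ⟨e, he, hnot⟩ := hT.exists_edge_not_mem_path hu hv huv
  refine ⟨e, he, ?_⟩
  rw [← sum_erase_eq_sub (mem_edgeFinset.mpr he), commonPathWeight,
    ← List.sum_toFinset _ ((hT.isPath_path r v).edges_nodup.filter _)]
  refine sum_le_sum_of_subset_of_nonneg (fun e' he' => ?_) fun e' he' _ => hx e' ?_
  · simp only [List.mem_toFinset, List.mem_filter, decide_eq_true_eq] at he'
    exact mem_erase.mpr ⟨fun h => hnot (h ▸ ⟨he'.2, he'.1⟩),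
      mem_edgeFinset.mpr ((hT.path r v).edges_subset_edgeSet he'.1)⟩
  · exact mem_edgeFinset.mp (mem_of_mem_erase he')

end IsTree

end SimpleGraph

lemma vecMul_reducedLap {N : ℕ} {G : SimpleGraph (Fin (N + 1))} [DecidableRel G.Adj]
    (b : Sym2 (Fin (N + 1)) → ℝ) {g : Fin (N + 1) → ℝ} (hg : g 0 = 0) (k : Fin N) :
    ((fun j => g j.succ) ᵥ* reducedLap N G b) k =
      ∑ v, if G.Adj k.succ v then (g k.succ - g v) * b s(k.succ, v) else 0 := by
  have hsplit : ∀ v, (if G.Adj k.succ v then (g k.succ - g v) * b s(k.succ, v) else 0) =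
      g k.succ * (if G.Adj k.succ v then b s(k.succ, v) else 0) -
        g v * (if G.Adj v k.succ then b s(v, k.succ) else 0) := by
    intro v
    by_cases h : G.Adj k.succ v
    · rw [if_pos h, if_pos h, if_pos h.symm, Sym2.eq_swap]; ring
    · rw [if_neg h, if_neg h, if_neg fun h' => h h'.symm]; ring
  simp only [vecMul, dotProduct, reducedLap, hsplit, sum_sub_distrib, ← mul_sum,
    Fin.sum_univ_succ (f := fun v => g v * _), hg, zero_mul, zero_add]
  rw [← Fintype.sum_ite_eq' k fun i => g i.succ * ∑ v,
      if G.Adj i.succ v then b s(i.succ, v) else 0, ← sum_sub_distrib]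
  refine sum_congr rfl fun i _ => ?_
  by_cases hik : i = k
  · subst hik
    simp
  · rw [if_neg hik, if_neg hik, zero_sub]
    split_ifs <;> ring

lemma inv_reducedLap_eq_commonPathWeight {N : ℕ} {T : SimpleGraph (Fin (N + 1))}
    [DecidableRel T.Adj] (hT : T.IsTree) {x : Sym2 (Fin (N + 1)) → ℝ}
    (hx : ∀ e ∈ T.edgeSet, x e ≠ 0) :
    (reducedLap N T fun e => (x e)⁻¹)⁻¹ =
      of fun i j => hT.commonPathWeight 0 x i.succ j.succ := by
  refine inv_eq_left_inv (ext fun i k => ?_)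
  have hrow := vecMul_reducedLap (G := T) (fun e => (x e)⁻¹)
    (hT.commonPathWeight_root (x := x) i.succ) k
  simp only [hT.sum_adj_commonPathWeight_sub_mul_inv hx (Fin.succ_ne_zero k), Fin.succ_inj] at hrow
  rw [mul_apply, one_apply]
  exact hrow.trans (if_congr eq_comm rfl rfl)

theorem stmt15_general (N : ℕ) (G T : SimpleGraph (Fin (N + 1))) [DecidableRel T.Adj]
    (hTG : T ≤ G) (hT : T.IsTree)
    (x : Sym2 (Fin (N + 1)) → ℝ) (hx : ∀ e ∈ G.edgeSet, 0 < x e)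
    (f xmin : ℝ)
    (hf : IsGreatest {w : ℝ | ∃ T' : SimpleGraph (Fin (N + 1)),
      T' ≤ G ∧ T'.IsTree ∧ w = ∑ e ∈ T'.edgeSet.toFinite.toFinset, x e} f)
    (hxmin : IsLeast {w : ℝ | ∃ e ∈ G.edgeSet, w = x e} xmin)
    (i j : Fin N) (hij : i ≠ j) :
    (reducedLap N T (fun e => (x e)⁻¹))⁻¹ i j ≤ f - xmin := by
  have hTG' := SimpleGraph.edgeSet_subset_edgeSet.mpr hTG
  have hxT : ∀ e ∈ T.edgeSet, 0 < x e := fun e he => hx e (hTG' he)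
  rw [inv_reducedLap_eq_commonPathWeight hT fun e he => (hxT e he).ne', of_apply]
  obtain ⟨e, he, hle⟩ := hT.exists_commonPathWeight_le (fun e he => (hxT e he).le)
    (Fin.succ_ne_zero i) (Fin.succ_ne_zero j) (Fin.succ_injective N |>.ne hij)
  have htotal : ∑ e ∈ T.edgeFinset, x e ≤ f := by
    convert hf.2 ⟨T, hTG, hT, rfl⟩ using 2
    ext; simp
  linarith [hxmin.2 ⟨e, hTG' he, rfl⟩]

theorem stmt15 (N : ℕ) (G T : SimpleGraph (Fin (N + 1))) [DecidableRel T.Adj]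
    (hG : G.Connected) (hTG : T ≤ G) (hT : T.IsTree)
    (x : Sym2 (Fin (N + 1)) → ℝ) (hx : ∀ e ∈ G.edgeSet, 0 < x e)
    (f xmin : ℝ)
    (hf : IsGreatest {w : ℝ | ∃ T' : SimpleGraph (Fin (N + 1)),
      T' ≤ G ∧ T'.IsTree ∧ w = ∑ e ∈ T'.edgeSet.toFinite.toFinset, x e} f)
    (hxmin : IsLeast {w : ℝ | ∃ e ∈ G.edgeSet, w = x e} xmin)
    (i j : Fin N) (hij : i ≠ j) :
    (reducedLap N T (fun e => (x e)⁻¹))⁻¹ i j ≤ f - xmin :=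
  stmt15_general N G T hTG hT x hx f xmin hf hxmin i j hij
end

section
/- Under the setting of the previous statement, with positive edge weights x on Ĝ and X = L̃^{-1} the inverse reduced susceptance Laplacian of spanning tree T (reference 0), it holds that X_{kj} ≥ h_j for every k ∈ V̄_e, where h_j is the shortest-path distance from j to 0 in Ĝ under weights x. -/
open Matrix

namespace Stmt17Aux

open SimpleGraph

variable {V : Type*} [DecidableEq V] {T : SimpleGraph V}

/-- The unique path in a tree from `v` to `r`. -/
noncomputable def tpath (hT : T.IsTree) (v r : V) : T.Walk v r :=
  (hT.existsUnique_path v r).exists.choose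

lemma tpath_isPath (hT : T.IsTree) (v r : V) : (tpath hT v r).IsPath :=
  (hT.existsUnique_path v r).exists.choose_spec

lemma path_eq_tpath (hT : T.IsTree) {v r : V} (w : T.Walk v r) (hw : w.IsPath) :
    w = tpath hT v r :=
  (hT.existsUnique_path v r).unique hw (tpath_isPath hT v r)

lemma tpath_self (hT : T.IsTree) (r : V) : tpath hT r r = Walk.nil :=
  (path_eq_tpath hT Walk.nil Walk.IsPath.nil).symm

/-- Indicator (as a real number) that edge `e` lies on the tree path from `v` to `r`. -/
noncomputable def gv (hT : T.IsTree) (r : V) (e : Sym2 V) (v : V) : ℝ :=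
  if e ∈ (tpath hT v r).edges then 1 else 0

lemma gv_root (hT : T.IsTree) (r : V) (e : Sym2 V) : gv hT r e r = 0 := by
  simp [gv, tpath_self]

/-- For adjacent `u v` in a tree, the path edge lists from `u` and from `v` to the root
differ by exactly the edge `s(u,v)`, consed on one side or the other. -/
lemma edges_cons_or (hT : T.IsTree) (r : V) {u v : V} (huv : T.Adj u v) :
    (tpath hT u r).edges = s(u, v) :: (tpath hT v r).edges ∨
    (tpath hT v r).edges = s(u, v) :: (tpath hT u r).edges := by
  by_cases hu : u ∈ (tpath hT v r).support
  · right
    have hdrop : (tpath hT v r).dropUntil u hu = tpath hT u r :=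
      path_eq_tpath hT _ ((tpath_isPath hT v r).dropUntil hu)
    have htake : (tpath hT v r).takeUntil u hu = Walk.cons huv.symm Walk.nil := by
      refine (hT.existsUnique_path v u).unique ((tpath_isPath hT v r).takeUntil hu) ?_
      rw [Walk.cons_isPath_iff]
      exact ⟨Walk.IsPath.nil, by simp [huv.ne']⟩
    have hspec := (tpath hT v r).take_spec hu
    conv_lhs => rw [← hspec]
    rw [Walk.edges_append, htake, hdrop]
    simp [Sym2.eq_swap]
  · left
    have : Walk.cons huv (tpath hT v r) = tpath hT u r :=
      path_eq_tpath hT _ (((tpath_isPath hT v r).cons) hu)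
    rw [← this, Walk.edges_cons]

lemma gv_eq_of_ne (hT : T.IsTree) (r : V) {u v : V} (huv : T.Adj u v)
    {e : Sym2 V} (he : e ≠ s(u, v)) : gv hT r e u = gv hT r e v := by
  unfold gv
  rcases edges_cons_or hT r huv with h | h <;> rw [h] <;>
    simp [List.mem_cons, he]

lemma gv_head (hT : T.IsTree) {r u v : V} (h : T.Adj v u) (q : T.Walk u r)
    (hp : (Walk.cons h q).IsPath) :
    gv hT r s(v, u) v = 1 ∧ gv hT r s(v, u) u = 0 := by
  have hv : Walk.cons h q = tpath hT v r := path_eq_tpath hT _ hp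
  have hq : q.IsPath := (Walk.cons_isPath_iff h q).mp hp |>.1
  have hvs : v ∉ q.support := (Walk.cons_isPath_iff h q).mp hp |>.2
  have hu : q = tpath hT u r := path_eq_tpath hT _ hq
  constructor
  · unfold gv
    rw [← hv]
    simp
  · unfold gv
    rw [← hu]
    have : s(v, u) ∉ q.edges := fun hmem => hvs (q.fst_mem_support_of_mem_edges hmem)
    simp [this]

/-- The key telescoping identity along a path to the root. -/
lemma sum_tele [Fintype V] (hT : T.IsTree) [DecidableRel T.Adj] (r w0 : V) :
    ∀ {v : V} (w : T.Walk v r), w0 ≠ r → w.IsPath →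
      (∑ k : V, if T.Adj w0 k ∧ s(w0, k) ∈ w.edges then
          gv hT r s(w0, k) w0 - gv hT r s(w0, k) k else 0)
        = (if v = w0 then 1 else 0) := by
  intro v w
  induction w with
  | nil =>
    intro hw0 _
    simp [Ne.symm hw0]
  | @cons v u r' hadj q ih =>
    intro hw0 hp
    have hq : q.IsPath := (Walk.cons_isPath_iff hadj q).mp hp |>.1
    have hvs : v ∉ q.support := (Walk.cons_isPath_iff hadj q).mp hp |>.2
    have hnotin : s(v, u) ∉ q.edges := fun hmem =>
      hvs (q.fst_mem_support_of_mem_edges hmem)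
    have hhead := gv_head hT hadj q hp
    have split : ∀ k : V,
        (if T.Adj w0 k ∧ s(w0, k) ∈ (Walk.cons hadj q).edges then
            gv hT r' s(w0, k) w0 - gv hT r' s(w0, k) k else 0)
        = (if T.Adj w0 k ∧ s(w0, k) = s(v, u) then
            gv hT r' s(w0, k) w0 - gv hT r' s(w0, k) k else 0)
          + (if T.Adj w0 k ∧ s(w0, k) ∈ q.edges then
            gv hT r' s(w0, k) w0 - gv hT r' s(w0, k) k else 0) := by
      intro k
      by_cases ha : T.Adj w0 k
      · by_cases he : s(w0, k) = s(v, u)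
        · simp [Walk.edges_cons, ha, he, hnotin]
        · by_cases hm : s(w0, k) ∈ q.edges
          · simp [Walk.edges_cons, ha, he, hm]
          · simp [Walk.edges_cons, ha, he, hm]
      · simp [ha]
    rw [Finset.sum_congr rfl fun k _ => split k, Finset.sum_add_distrib, ih hw0 hq]
    have key : (∑ k : V, if T.Adj w0 k ∧ s(w0, k) = s(v, u) then
        gv hT r' s(w0, k) w0 - gv hT r' s(w0, k) k else 0)
        = (if v = w0 then 1 else 0) - (if u = w0 then 1 else 0) := by
      by_cases hv0 : v = w0
      · subst hv0
        have hne : u ≠ v := hadj.ne'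
        have : ∀ k : V, (if T.Adj v k ∧ s(v, k) = s(v, u) then
            gv hT r' s(v, k) v - gv hT r' s(v, k) k else 0)
            = (if k = u then gv hT r' s(v, u) v - gv hT r' s(v, u) u else 0) := by
          intro k
          by_cases hk : k = u
          · subst hk; simp [hadj]
          · have : s(v, k) ≠ s(v, u) := fun hh => hk (Sym2.congr_right.mp hh)
            simp [hk, this]
        rw [Finset.sum_congr rfl fun k _ => this k, Finset.sum_ite_eq' Finset.univ u]
        simp [hhead.1, hhead.2, hne]
      · by_cases hu0 : u = w0
        · subst hu0
          have hne : v ≠ u := hadj.ne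
          have : ∀ k : V, (if T.Adj u k ∧ s(u, k) = s(v, u) then
              gv hT r' s(u, k) u - gv hT r' s(u, k) k else 0)
              = (if k = v then gv hT r' s(u, v) u - gv hT r' s(u, v) v else 0) := by
            intro k
            by_cases hk : k = v
            · subst hk
              simp [hadj.symm, Sym2.eq_swap]
            · have : s(u, k) ≠ s(v, u) := by
                rw [Sym2.eq_swap (a := v)]
                exact fun hh => hk (Sym2.congr_right.mp hh)
              simp [hk, this]
          rw [Finset.sum_congr rfl fun k _ => this k,
            Finset.sum_ite_eq' Finset.univ v]
          have h1 : gv hT r' s(u, v) v = 1 := by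
            rw [Sym2.eq_swap]; exact hhead.1
          have h0 : gv hT r' s(u, v) u = 0 := by
            rw [Sym2.eq_swap]; exact hhead.2
          simp [h1, h0, hv0]
        · have : ∀ k : V, (if T.Adj w0 k ∧ s(w0, k) = s(v, u) then
              gv hT r' s(w0, k) w0 - gv hT r' s(w0, k) k else 0) = 0 := by
            intro k
            have : s(w0, k) ≠ s(v, u) := by
              intro hh
              rw [Sym2.eq_iff] at hh
              rcases hh with ⟨h1, _⟩ | ⟨h1, _⟩
              · exact hv0 h1.symm
              · exact hu0 h1.symm
            simp [this]
          rw [Finset.sum_congr rfl fun k _ => this k]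
          simp [hv0, hu0]
    rw [key]
    ring

end Stmt17Aux

open Stmt17Aux SimpleGraph

/-- Candidate inverse: `X i j = ∑_{e ∈ T} x e · [e on path 0→i] · [e on path 0→j]`. -/
noncomputable def Xmat (N : ℕ) (T : SimpleGraph (Fin (N + 1))) [DecidableRel T.Adj]
    (hT : T.IsTree) (x : Sym2 (Fin (N + 1)) → ℝ) : Matrix (Fin N) (Fin N) ℝ :=
  fun i j => ∑ e ∈ T.edgeFinset, x e * gv hT 0 e i.succ * gv hT 0 e j.succ

lemma reducedLap_mul_Xmat (N : ℕ) (T : SimpleGraph (Fin (N + 1)))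
    [DecidableRel T.Adj] (hT : T.IsTree) (x : Sym2 (Fin (N + 1)) → ℝ)
    (hx : ∀ e ∈ T.edgeSet, x e ≠ 0) :
    reducedLap N T (fun e => (x e)⁻¹) * Xmat N T hT x = 1 := by
  ext i j
  rw [Matrix.mul_apply, Matrix.one_apply]
  -- inner sum lemma
  have hL : ∀ m : Fin N, reducedLap N T (fun e => (x e)⁻¹) i m
      = (if i = m then
            (∑ k : Fin (N + 1), if T.Adj i.succ k then (x s(i.succ, k))⁻¹ else 0)
          else 0)
        + (if T.Adj i.succ m.succ then -(x s(i.succ, m.succ))⁻¹ else 0) := by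
    intro m
    by_cases h : i = m
    · subst h
      simp [reducedLap, T.irrefl]
    · simp [reducedLap, h]
  have inner : ∀ e ∈ T.edgeFinset,
      (∑ m : Fin N, reducedLap N T (fun e => (x e)⁻¹) i m * gv hT 0 e m.succ)
      = ∑ k : Fin (N + 1), if T.Adj i.succ k ∧ s(i.succ, k) = e then
          (x e)⁻¹ * (gv hT 0 e i.succ - gv hT 0 e k) else 0 := by
    intro e he
    rw [SimpleGraph.mem_edgeFinset] at he
    have step1 : (∑ m : Fin N, reducedLap N T (fun e => (x e)⁻¹) i m * gv hT 0 e m.succ)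
        = (∑ k : Fin (N + 1), if T.Adj i.succ k then
            (x s(i.succ, k))⁻¹ * gv hT 0 e i.succ else 0)
          + (∑ m : Fin N, if T.Adj i.succ m.succ then
            -(x s(i.succ, m.succ))⁻¹ * gv hT 0 e m.succ else 0) := by
      rw [Finset.sum_congr rfl fun m _ => by rw [hL m, add_mul]]
      rw [Finset.sum_add_distrib]
      congr 1
      · have : ∀ m : Fin N,
            (if i = m then
              (∑ k : Fin (N + 1), if T.Adj i.succ k then (x s(i.succ, k))⁻¹ else 0)
              else 0) * gv hT 0 e m.succ
            = (if i = m then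
                (∑ k : Fin (N + 1), if T.Adj i.succ k then (x s(i.succ, k))⁻¹ else 0)
                  * gv hT 0 e m.succ else 0) := by
          intro m; split <;> simp
        rw [Finset.sum_congr rfl fun m _ => this m, Finset.sum_ite_eq Finset.univ i]
        simp only [Finset.mem_univ, if_true, Finset.sum_mul]
        exact Finset.sum_congr rfl fun k _ => by split <;> simp
      · exact Finset.sum_congr rfl fun m _ => by split <;> simp
    rw [step1]
    have step2 : (∑ m : Fin N, if T.Adj i.succ m.succ then
          -(x s(i.succ, m.succ))⁻¹ * gv hT 0 e m.succ else 0)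
        = ∑ k : Fin (N + 1), if T.Adj i.succ k then
            -(x s(i.succ, k))⁻¹ * gv hT 0 e k else 0 := by
      rw [Fin.sum_univ_succ (f := fun k : Fin (N + 1) =>
        if T.Adj i.succ k then -(x s(i.succ, k))⁻¹ * gv hT 0 e k else 0)]
      rw [gv_root]
      simp
    rw [step2, ← Finset.sum_add_distrib]
    refine Finset.sum_congr rfl fun k _ => ?_
    by_cases ha : T.Adj i.succ k
    · by_cases hek : s(i.succ, k) = e
      · subst hek
        simp only [ha, if_true, and_true, true_and, if_pos rfl]
        ring
      · have hgeq : gv hT 0 e i.succ = gv hT 0 e k :=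
          gv_eq_of_ne hT 0 ha (Ne.symm hek)
        simp only [ha, true_and, if_true, hek, if_false, hgeq]
        ring
    · simp [ha]
  -- rewrite the matrix product using `inner`
  have expand : (∑ m : Fin N, reducedLap N T (fun e => (x e)⁻¹) i m * Xmat N T hT x m j)
      = ∑ e ∈ T.edgeFinset, x e * gv hT 0 e j.succ *
          (∑ m : Fin N, reducedLap N T (fun e => (x e)⁻¹) i m * gv hT 0 e m.succ) := by
    unfold Xmat
    calc (∑ m : Fin N, reducedLap N T (fun e => (x e)⁻¹) i m *
            ∑ e ∈ T.edgeFinset, x e * gv hT 0 e m.succ * gv hT 0 e j.succ)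
        = ∑ m : Fin N, ∑ e ∈ T.edgeFinset, x e * gv hT 0 e j.succ *
            (reducedLap N T (fun e => (x e)⁻¹) i m * gv hT 0 e m.succ) := by
          refine Finset.sum_congr rfl fun m _ => ?_
          rw [Finset.mul_sum]
          exact Finset.sum_congr rfl fun e _ => by ring
      _ = ∑ e ∈ T.edgeFinset, ∑ m : Fin N, x e * gv hT 0 e j.succ *
            (reducedLap N T (fun e => (x e)⁻¹) i m * gv hT 0 e m.succ) :=
          Finset.sum_comm
      _ = ∑ e ∈ T.edgeFinset, x e * gv hT 0 e j.succ *
            ∑ m : Fin N, reducedLap N T (fun e => (x e)⁻¹) i m * gv hT 0 e m.succ := by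
          exact Finset.sum_congr rfl fun e _ => (Finset.mul_sum _ _ _).symm
  rw [expand, Finset.sum_congr rfl (fun e he => by rw [inner e he])]
  have step3 : (∑ e ∈ T.edgeFinset, x e * gv hT 0 e j.succ *
        ∑ k : Fin (N + 1), if T.Adj i.succ k ∧ s(i.succ, k) = e then
          (x e)⁻¹ * (gv hT 0 e i.succ - gv hT 0 e k) else 0)
      = ∑ e ∈ T.edgeFinset, ∑ k : Fin (N + 1),
          if T.Adj i.succ k ∧ s(i.succ, k) = e then
            gv hT 0 e j.succ * (gv hT 0 e i.succ - gv hT 0 e k) else 0 := by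
    refine Finset.sum_congr rfl fun e he => ?_
    rw [SimpleGraph.mem_edgeFinset] at he
    rw [Finset.mul_sum]
    refine Finset.sum_congr rfl fun k _ => ?_
    split
    · rw [mul_comm (x e), mul_assoc, ← mul_assoc (x e), mul_inv_cancel₀ (hx e he),
        one_mul]
    · simp
  rw [step3, Finset.sum_comm]
  have step4 : (∑ k : Fin (N + 1), ∑ e ∈ T.edgeFinset,
        if T.Adj i.succ k ∧ s(i.succ, k) = e then
          gv hT 0 e j.succ * (gv hT 0 e i.succ - gv hT 0 e k) else 0)
      = ∑ k : Fin (N + 1), if T.Adj i.succ k ∧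
            s(i.succ, k) ∈ (tpath hT j.succ 0).edges then
          gv hT 0 s(i.succ, k) i.succ - gv hT 0 s(i.succ, k) k else 0 := by
    refine Finset.sum_congr rfl fun k _ => ?_
    by_cases ha : T.Adj i.succ k
    · have hmem : s(i.succ, k) ∈ T.edgeFinset := by
        rw [SimpleGraph.mem_edgeFinset]; exact ha
      have : ∀ e ∈ T.edgeFinset,
          (if T.Adj i.succ k ∧ s(i.succ, k) = e then
            gv hT 0 e j.succ * (gv hT 0 e i.succ - gv hT 0 e k) else 0)
          = (if s(i.succ, k) = e then
            gv hT 0 e j.succ * (gv hT 0 e i.succ - gv hT 0 e k) else 0) := by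
        intro e _
        simp [ha]
      rw [Finset.sum_congr rfl this, Finset.sum_ite_eq T.edgeFinset s(i.succ, k)]
      rw [if_pos hmem]
      unfold gv
      by_cases hm : s(i.succ, k) ∈ (tpath hT j.succ 0).edges
      · simp [hm, ha]
      · simp [hm, ha]
    · simp [ha]
  rw [step4]
  rw [sum_tele hT 0 i.succ (tpath hT j.succ 0) (Fin.succ_ne_zero i)
    (tpath_isPath hT j.succ 0)]
  by_cases hij : i = j
  · subst hij; simp
  · have : j.succ ≠ i.succ := fun hh => hij (Fin.succ_injective N hh).symm
    simp [hij, this]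

theorem stmt17 (N : ℕ) (G T : SimpleGraph (Fin (N + 1))) [DecidableRel T.Adj]
    (hG : G.Connected) (hTG : T ≤ G) (hT : T.IsTree)
    (x : Sym2 (Fin (N + 1)) → ℝ) (hx : ∀ e ∈ G.edgeSet, 0 < x e)
    (a : Fin (N + 1)) (j : Fin N) (haj : a ≠ j.succ)
    (hbridge : G.IsBridge s(a, j.succ))
    (hside : (G.deleteEdges {s(a, j.succ)}).Reachable 0 a)
    (h : Fin (N + 1) → ℝ)
    (hh : ∀ v : Fin (N + 1),
      IsLeast {d : ℝ | ∃ p : G.Walk v 0, p.IsPath ∧ d = (p.edges.map x).sum} (h v))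
    (k : Fin N) (hk : ¬ (G.deleteEdges {s(a, j.succ)}).Reachable 0 k.succ) :
    h j.succ ≤ (reducedLap N T (fun e => (x e)⁻¹))⁻¹ k j := by
  have hxT : ∀ e ∈ T.edgeSet, x e ≠ 0 := fun e he =>
    (hx e (edgeSet_mono hTG he)).ne'
  rw [Matrix.inv_eq_right_inv (reducedLap_mul_Xmat N T hT x hxT)]
  have hTsub : ∀ e ∈ (tpath hT k.succ 0).edges, e ∈ G.edgeSet := fun e he =>
    edgeSet_mono hTG ((tpath hT k.succ 0).edges_subset_edgeSet he)
  -- the tree path from k.succ to 0 must use the bridge, hence passes through j.succ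
  have hmem : s(a, j.succ) ∈ (tpath hT k.succ 0).edges := by
    by_contra hne
    apply hk
    refine ⟨(((tpath hT k.succ 0).transfer G hTsub).reverse).toDeleteEdges
      {s(a, j.succ)} ?_⟩
    intro e he hes
    rw [Set.mem_singleton_iff] at hes
    subst hes
    rw [SimpleGraph.Walk.edges_reverse, List.mem_reverse,
      SimpleGraph.Walk.edges_transfer] at he
    exact hne he
  have hjs : j.succ ∈ (tpath hT k.succ 0).support :=
    (tpath hT k.succ 0).snd_mem_support_of_mem_edges hmem
  have hd : (tpath hT k.succ 0).dropUntil j.succ hjs = tpath hT j.succ 0 :=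
    path_eq_tpath hT _ ((tpath_isPath hT k.succ 0).dropUntil hjs)
  have hsub : ∀ e ∈ (tpath hT j.succ 0).edges, e ∈ (tpath hT k.succ 0).edges := by
    intro e he
    rw [← hd] at he
    exact (tpath hT k.succ 0).edges_dropUntil_subset hjs he
  have hXeq : Xmat N T hT x k j = ((tpath hT j.succ 0).edges.map x).sum := by
    unfold Xmat
    have hcongr : ∀ e ∈ T.edgeFinset, x e * gv hT 0 e k.succ * gv hT 0 e j.succ
        = if e ∈ (tpath hT j.succ 0).edges.toFinset then x e else 0 := by
      intro e _
      unfold gv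
      by_cases hm : e ∈ (tpath hT j.succ 0).edges
      · have hmk : e ∈ (tpath hT k.succ 0).edges := hsub e hm
        simp [hm, hmk]
      · simp [hm]
    rw [Finset.sum_congr rfl hcongr, Finset.sum_ite_mem,
      Finset.inter_eq_right.mpr (fun e he => by
        rw [SimpleGraph.mem_edgeFinset]
        exact (tpath hT j.succ 0).edges_subset_edgeSet (List.mem_toFinset.mp he))]
    exact List.sum_toFinset x (tpath_isPath hT j.succ 0).isTrail.edges_nodup
  rw [hXeq]
  have htrans : ∀ e ∈ (tpath hT j.succ 0).edges, e ∈ G.edgeSet := fun e he =>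
    edgeSet_mono hTG ((tpath hT j.succ 0).edges_subset_edgeSet he)
  exact (hh j.succ).2 ⟨(tpath hT j.succ 0).transfer G htrans,
    (tpath_isPath hT j.succ 0).transfer htrans,
    by rw [SimpleGraph.Walk.edges_transfer]⟩
end
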